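/- arXiv:2504.14841 — 7 statements merged into one kernel-verified Lean document; each statement's English description precedes it below -/
import Mathlib

section
/- Let A be the (ℓ+1)×(ℓ+1) real symmetric tridiagonal matrix with diagonal entries p_0,...,p_ℓ and all off-diagonal (super/sub-diagonal) entries equal to -λ for some λ > 0. Suppose there exists an index i and C > 0 such that p_j ≥ p_i + C for all j ≠ i. Then the spectral gap of A (difference between its two smallest eigenvalues) is at least C - 4λ. -/
/-- The `(ℓ+1) × (ℓ+1)` real symmetric tridiagonal matrix with diagonal entries `p 0, ..., p ℓ`
and all off-diagonal (super/sub-diagonal) entries equal to `-lam`. -/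
def tridiag (ℓ : ℕ) (p : Fin (ℓ + 1) → ℝ) (lam : ℝ) :
    Matrix (Fin (ℓ + 1)) (Fin (ℓ + 1)) ℝ :=
  Matrix.of fun i j =>
    if i = j then p i
    else if (i : ℕ) + 1 = (j : ℕ) ∨ (j : ℕ) + 1 = (i : ℕ) then -lam
    else 0

/-- The eigenvalues of a Hermitian matrix, sorted in increasing order. -/
noncomputable def sortedEigenvalues {N : ℕ} {𝕜 : Type} [RCLike 𝕜]
    {A : Matrix (Fin N) (Fin N) 𝕜} (hA : A.IsHermitian) : Fin N → ℝ :=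
  hA.eigenvalues ∘ Tuple.sort hA.eigenvalues


open Matrix Finset


lemma aux_sum_dotProduct {n m : ℕ} (f : Fin m → Fin n → ℝ) (w : Fin n → ℝ) :
    (∑ s, f s) ⬝ᵥ w = ∑ s, f s ⬝ᵥ w := by
  simp only [dotProduct, Finset.sum_apply, Finset.sum_mul]
  exact Finset.sum_comm

lemma aux_dotProduct_sum {n m : ℕ} (w : Fin n → ℝ) (f : Fin m → Fin n → ℝ) :
    w ⬝ᵥ (∑ s, f s) = ∑ s, w ⬝ᵥ f s := by
  simp only [dotProduct, Finset.sum_apply, Finset.mul_sum]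
  exact Finset.sum_comm

lemma aux_onb_dot {n : ℕ} (b : OrthonormalBasis (Fin n) ℝ (EuclideanSpace ℝ (Fin n))) (s t : Fin n) :
    (⇑(b s)) ⬝ᵥ (⇑(b t)) = if s = t then (1:ℝ) else 0 := by
  simpa [PiLp.inner_apply, dotProduct, mul_comm] using orthonormal_iff_ite.mp b.orthonormal s t

lemma aux_onb_expand {n : ℕ} (b : OrthonormalBasis (Fin n) ℝ (EuclideanSpace ℝ (Fin n)))
    (x : Fin n → ℝ) : x = ∑ t, ((⇑(b t)) ⬝ᵥ x) • ⇑(b t) := by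
  have h := b.sum_repr' (WithLp.toLp 2 x)
  have h2 : ∀ t, inner ℝ (b t) (WithLp.toLp 2 x) = (⇑(b t)) ⬝ᵥ x := by
    intro t; simp [PiLp.inner_apply, dotProduct, mul_comm]
  calc x = ⇑((∑ t, (inner ℝ (b t) (WithLp.toLp 2 x) : ℝ) • b t :
            EuclideanSpace ℝ (Fin n))) := by rw [h]
    _ = ∑ t, ((⇑(b t)) ⬝ᵥ x) • ⇑(b t) := by simp only [h2, WithLp.ofLp_sum, WithLp.ofLp_smul]

lemma aux_dot_sum_sum {n : ℕ} (b : OrthonormalBasis (Fin n) ℝ (EuclideanSpace ℝ (Fin n)))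
    (d e : Fin n → ℝ) :
    (∑ s, d s • ⇑(b s)) ⬝ᵥ (∑ t, e t • ⇑(b t)) = ∑ t, d t * e t := by
  rw [aux_sum_dotProduct]
  simp only [aux_dotProduct_sum, smul_dotProduct, dotProduct_smul, aux_onb_dot, smul_eq_mul,
    mul_ite, mul_one, mul_zero]
  simp [Finset.sum_ite_eq]

lemma aux_rayleigh_ge {n : ℕ} {A : Matrix (Fin n) (Fin n) ℝ} (hA : A.IsHermitian) (m : ℝ)
    (hm : ∀ t, m ≤ hA.eigenvalues t) (x : Fin n → ℝ) :
    m * (x ⬝ᵥ x) ≤ x ⬝ᵥ (A *ᵥ x) := by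
  set b := hA.eigenvectorBasis with hbdef
  set c : Fin n → ℝ := fun t => (⇑(b t)) ⬝ᵥ x with hc
  have hx : x = ∑ t, c t • ⇑(b t) := aux_onb_expand b x
  have hAx : A *ᵥ x = ∑ t, (c t * hA.eigenvalues t) • ⇑(b t) := by
    conv_lhs => rw [hx]
    rw [← Matrix.mulVecLin_apply, map_sum]
    refine Finset.sum_congr rfl fun t _ => ?_
    rw [LinearMap.map_smul, Matrix.mulVecLin_apply, hA.mulVec_eigenvectorBasis, smul_smul]
  have h1 : x ⬝ᵥ (A *ᵥ x) = ∑ t, hA.eigenvalues t * (c t * c t) := by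
    rw [hAx]
    conv_lhs => rw [hx]
    rw [aux_dot_sum_sum]
    refine Finset.sum_congr rfl fun t _ => by ring
  have h2 : x ⬝ᵥ x = ∑ t, c t * c t := by
    conv_lhs => rw [hx, aux_dot_sum_sum]
  rw [h1, h2, Finset.mul_sum]
  refine Finset.sum_le_sum fun t _ => ?_
  have := mul_le_mul_of_nonneg_right (hm t) (mul_self_nonneg (c t))
  linarith

lemma aux_card_nbrs {n : ℕ} (j : Fin n) :
    (Finset.univ.filter (fun k : Fin n => (j : ℕ) + 1 = (k : ℕ) ∨ (k : ℕ) + 1 = (j : ℕ))).card ≤ 2 := by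
  have h := Finset.card_le_card_of_injOn
    (s := Finset.univ.filter (fun k : Fin n => (j : ℕ) + 1 = (k : ℕ) ∨ (k : ℕ) + 1 = (j : ℕ)))
    (t := (Finset.univ : Finset Bool))
    (fun k : Fin n => decide ((j : ℕ) + 1 = (k : ℕ)))
    (fun a _ => Finset.mem_univ _) ?_
  · simpa using h
  · intro a ha b hb hab
    simp only [Finset.coe_filter, Set.mem_setOf_eq, Finset.mem_univ, true_and] at ha hb
    simp only [decide_eq_decide] at hab
    apply Fin.ext
    by_cases hcase : (j : ℕ) + 1 = (a : ℕ)
    · have := hab.mp hcase; omega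
    · have h2 : ¬ ((j : ℕ) + 1 = (b : ℕ)) := fun h => hcase (hab.mpr h)
      rcases ha with h | h; · exact absurd h hcase
      rcases hb with h' | h'; · exact absurd h' h2
      omega

lemma aux_quadform_ge (ℓ : ℕ) (p : Fin (ℓ + 1) → ℝ) (lam C : ℝ) (hlam : 0 < lam)
    (i : Fin (ℓ + 1)) (hp : ∀ j : Fin (ℓ + 1), j ≠ i → p j ≥ p i + C)
    (x : Fin (ℓ + 1) → ℝ) (hxi : x i = 0) :
    (p i + C - 2 * lam) * (x ⬝ᵥ x) ≤ x ⬝ᵥ (tridiag ℓ p lam *ᵥ x) := by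
  have hSsum : x ⬝ᵥ x = ∑ j : Fin (ℓ + 1), x j * x j := rfl
  set S : ℝ := x ⬝ᵥ x with hS
  set T : ℝ := ∑ j : Fin (ℓ + 1), ∑ k : Fin (ℓ + 1),
      (if (j : ℕ) + 1 = (k : ℕ) ∨ (k : ℕ) + 1 = (j : ℕ) then x j * x k else 0) with hT
  -- quadratic form identity
  have hQ : x ⬝ᵥ (tridiag ℓ p lam *ᵥ x)
      = (∑ j : Fin (ℓ + 1), p j * (x j * x j)) - lam * T := by
    have h0 : x ⬝ᵥ (tridiag ℓ p lam *ᵥ x)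
        = ∑ j : Fin (ℓ + 1), ∑ k : Fin (ℓ + 1), x j * (tridiag ℓ p lam j k * x k) := by
      simp [dotProduct, Matrix.mulVec, dotProduct, Finset.mul_sum]
    rw [h0, hT, Finset.mul_sum, ← Finset.sum_sub_distrib]
    refine Finset.sum_congr rfl fun j _ => ?_
    have h1 : p j * (x j * x j)
        = ∑ k : Fin (ℓ + 1), (if j = k then p j * (x j * x k) else 0) := by
      rw [Finset.sum_ite_eq Finset.univ j (fun k => p j * (x j * x k))]
      simp
    rw [h1, Finset.mul_sum, ← Finset.sum_sub_distrib]
    refine Finset.sum_congr rfl fun k _ => ?_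
    simp only [tridiag, Matrix.of_apply]
    by_cases hjk : j = k
    · subst hjk
      have h2 : ¬ ((j : ℕ) + 1 = (j : ℕ) ∨ (j : ℕ) + 1 = (j : ℕ)) := by omega
      simp [h2]
      ring
    · by_cases h2 : (j : ℕ) + 1 = (k : ℕ) ∨ (k : ℕ) + 1 = (j : ℕ)
      · simp only [hjk, if_false, h2, if_true]; ring
      · simp [hjk, h2]
  -- bound on T
  have key : ∀ y : Fin (ℓ + 1) → ℝ,
      (∑ j : Fin (ℓ + 1), ∑ k : Fin (ℓ + 1),
        (if (j : ℕ) + 1 = (k : ℕ) ∨ (k : ℕ) + 1 = (j : ℕ) then y j * y j else 0))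
      ≤ 2 * ∑ j : Fin (ℓ + 1), y j * y j := by
    intro y
    rw [Finset.mul_sum]
    refine Finset.sum_le_sum fun j _ => ?_
    rw [← Finset.sum_filter, Finset.sum_const, nsmul_eq_mul]
    have hcard : ((Finset.univ.filter (fun k : Fin (ℓ + 1) =>
        (j : ℕ) + 1 = (k : ℕ) ∨ (k : ℕ) + 1 = (j : ℕ))).card : ℝ) ≤ 2 := by
      exact_mod_cast aux_card_nbrs j
    nlinarith [mul_self_nonneg (y j), hcard,
      Nat.cast_nonneg (α := ℝ) (Finset.univ.filter (fun k : Fin (ℓ + 1) =>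
        (j : ℕ) + 1 = (k : ℕ) ∨ (k : ℕ) + 1 = (j : ℕ))).card]
  have key2 : (∑ j : Fin (ℓ + 1), ∑ k : Fin (ℓ + 1),
      (if (j : ℕ) + 1 = (k : ℕ) ∨ (k : ℕ) + 1 = (j : ℕ) then x k * x k else 0))
      ≤ 2 * ∑ j : Fin (ℓ + 1), x j * x j := by
    rw [Finset.sum_comm]
    calc (∑ k : Fin (ℓ + 1), ∑ j : Fin (ℓ + 1),
          (if (j : ℕ) + 1 = (k : ℕ) ∨ (k : ℕ) + 1 = (j : ℕ) then x k * x k else 0))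
        = ∑ k : Fin (ℓ + 1), ∑ j : Fin (ℓ + 1),
          (if (k : ℕ) + 1 = (j : ℕ) ∨ (j : ℕ) + 1 = (k : ℕ) then x k * x k else 0) := by
          refine Finset.sum_congr rfl fun k _ => Finset.sum_congr rfl fun j _ => ?_
          congr 1
          exact propext or_comm
      _ ≤ 2 * ∑ j : Fin (ℓ + 1), x j * x j := key x
  have hTbound : T ≤ 2 * S := by
    have step1 : T ≤ ∑ j : Fin (ℓ + 1), ∑ k : Fin (ℓ + 1),
        (if (j : ℕ) + 1 = (k : ℕ) ∨ (k : ℕ) + 1 = (j : ℕ)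
          then (x j * x j + x k * x k) / 2 else 0) := by
      rw [hT]
      refine Finset.sum_le_sum fun j _ => Finset.sum_le_sum fun k _ => ?_
      by_cases h : (j : ℕ) + 1 = (k : ℕ) ∨ (k : ℕ) + 1 = (j : ℕ)
      · simp only [h, if_true]; nlinarith [sq_nonneg (x j - x k)]
      · simp [h]
    have split : (∑ j : Fin (ℓ + 1), ∑ k : Fin (ℓ + 1),
        (if (j : ℕ) + 1 = (k : ℕ) ∨ (k : ℕ) + 1 = (j : ℕ)
          then (x j * x j + x k * x k) / 2 else 0))
        = ((∑ j : Fin (ℓ + 1), ∑ k : Fin (ℓ + 1),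
            (if (j : ℕ) + 1 = (k : ℕ) ∨ (k : ℕ) + 1 = (j : ℕ) then x j * x j else 0))
          + (∑ j : Fin (ℓ + 1), ∑ k : Fin (ℓ + 1),
            (if (j : ℕ) + 1 = (k : ℕ) ∨ (k : ℕ) + 1 = (j : ℕ) then x k * x k else 0))) / 2 := by
      rw [← Finset.sum_add_distrib, Finset.sum_div]
      refine Finset.sum_congr rfl fun j _ => ?_
      rw [← Finset.sum_add_distrib, Finset.sum_div]
      refine Finset.sum_congr rfl fun k _ => ?_
      by_cases h : (j : ℕ) + 1 = (k : ℕ) ∨ (k : ℕ) + 1 = (j : ℕ) <;> simp [h]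
    have hk := key x
    rw [hSsum]
    calc T ≤ _ := step1
      _ = _ := split
      _ ≤ 2 * ∑ j : Fin (ℓ + 1), x j * x j := by linarith
  -- diag bound
  have hdiag : (p i + C) * S ≤ ∑ j : Fin (ℓ + 1), p j * (x j * x j) := by
    rw [hSsum, Finset.mul_sum]
    refine Finset.sum_le_sum fun j _ => ?_
    by_cases h : j = i
    · subst h; rw [hxi]; ring_nf; exact le_refl _
    · have := hp j h
      nlinarith [mul_self_nonneg (x j)]
  have hSnn : 0 ≤ S := by
    rw [hSsum]; exact Finset.sum_nonneg fun j _ => mul_self_nonneg (x j)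
  rw [hQ]
  nlinarith [hTbound, hdiag, hSnn, hlam]

/-- if `p j ≥ p i + C` for all `j ≠ i`, the spectral gap (second smallest minus
smallest eigenvalue) of the tridiagonal matrix is at least `C - 4λ`. -/
theorem tridiag_gap_single (ℓ : ℕ) (hℓ : 1 ≤ ℓ) (p : Fin (ℓ + 1) → ℝ) (lam C : ℝ)
    (hlam : 0 < lam) (hC : 0 < C) (i : Fin (ℓ + 1))
    (hp : ∀ j : Fin (ℓ + 1), j ≠ i → p j ≥ p i + C)
    (hA : (tridiag ℓ p lam).IsHermitian) :
    sortedEigenvalues hA 1 - sortedEigenvalues hA 0 ≥ C - 4 * lam := by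
  have hmono : Monotone (hA.eigenvalues ∘ Tuple.sort hA.eigenvalues) :=
    Tuple.monotone_sort hA.eigenvalues
  set f := hA.eigenvalues with hf
  set σ := Tuple.sort f with hσ
  have hμdef : sortedEigenvalues hA = f ∘ σ := rfl
  have hmin : ∀ t, (f ∘ σ) 0 ≤ f t := by
    intro t
    have h := hmono (Fin.zero_le (σ.symm t))
    simpa using h
  -- Step A : smallest sorted eigenvalue ≤ p i
  have hA0 : (f ∘ σ) 0 ≤ p i := by
    have h := aux_rayleigh_ge hA ((f ∘ σ) 0) hmin (Pi.single i 1)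
    have e1 : (Pi.single i 1 : Fin (ℓ+1) → ℝ) ⬝ᵥ (Pi.single i 1) = 1 := by
      rw [single_dotProduct]; simp
    have e2 : (Pi.single i 1 : Fin (ℓ+1) → ℝ) ⬝ᵥ (tridiag ℓ p lam *ᵥ Pi.single i 1) = p i := by
      rw [Matrix.mulVec_single, single_dotProduct]
      simp [tridiag]
    rw [e1, e2, mul_one] at h
    exact h
  -- Step B : second sorted eigenvalue ≥ p i + C - 2 lam
  set b := hA.eigenvectorBasis with hb
  set u0 : Fin (ℓ+1) → ℝ := ⇑(b (σ 0)) with hu0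
  set u1 : Fin (ℓ+1) → ℝ := ⇑(b (σ 1)) with hu1
  have h01 : (0 : Fin (ℓ+1)) ≠ 1 := by
    intro h
    have := congrArg Fin.val h
    simp [Fin.val_one] at this
    omega
  have hne : σ 0 ≠ σ 1 := fun h => h01 (σ.injective h)
  have d00 : u0 ⬝ᵥ u0 = 1 := by simpa using aux_onb_dot b (σ 0) (σ 0)
  have d11 : u1 ⬝ᵥ u1 = 1 := by simpa using aux_onb_dot b (σ 1) (σ 1)
  have d01 : u0 ⬝ᵥ u1 = 0 := by simpa [hne] using aux_onb_dot b (σ 0) (σ 1)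
  have d10 : u1 ⬝ᵥ u0 = 0 := by simpa [hne.symm] using aux_onb_dot b (σ 1) (σ 0)
  have eig0 : tridiag ℓ p lam *ᵥ u0 = (f ∘ σ) 0 • u0 := hA.mulVec_eigenvectorBasis (σ 0)
  have eig1 : tridiag ℓ p lam *ᵥ u1 = (f ∘ σ) 1 • u1 := hA.mulVec_eigenvectorBasis (σ 1)
  have hμ01 : (f ∘ σ) 0 ≤ (f ∘ σ) 1 := hmono (Fin.zero_le 1)
  have hB : p i + C - 2 * lam ≤ (f ∘ σ) 1 := by
    by_cases h0 : u0 i = 0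
    · have h := aux_quadform_ge ℓ p lam C hlam i hp u0 h0
      rw [eig0, dotProduct_smul, d00, smul_eq_mul] at h
      linarith
    · set a : ℝ := u1 i with ha
      set c : ℝ := u0 i with hc
      set x : Fin (ℓ+1) → ℝ := a • u0 - c • u1 with hx
      have hxi : x i = 0 := by
        simp only [hx, Pi.sub_apply, Pi.smul_apply, smul_eq_mul, ha, hc]
        ring
      have hxx : x ⬝ᵥ x = a * a + c * c := by
        rw [hx]
        simp only [sub_dotProduct, dotProduct_sub, smul_dotProduct,
          dotProduct_smul, smul_eq_mul, d00, d01, d10, d11]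
        ring
      have hAx : tridiag ℓ p lam *ᵥ x = a • ((f ∘ σ) 0 • u0) - c • ((f ∘ σ) 1 • u1) := by
        rw [hx, Matrix.mulVec_sub, Matrix.mulVec_smul, Matrix.mulVec_smul, eig0, eig1]
      have hxAx : x ⬝ᵥ (tridiag ℓ p lam *ᵥ x)
          = (f ∘ σ) 0 * (a * a) + (f ∘ σ) 1 * (c * c) := by
        rw [hAx, hx]
        simp only [sub_dotProduct, dotProduct_sub, smul_dotProduct,
          dotProduct_smul, smul_eq_mul, d00, d01, d10, d11]
        ring
      have h := aux_quadform_ge ℓ p lam C hlam i hp x hxi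
      rw [hxx, hxAx] at h
      have hpos : 0 < a * a + c * c := by
        have : 0 < c * c := mul_self_pos.mpr h0
        nlinarith [mul_self_nonneg a]
      nlinarith [mul_self_nonneg a, mul_self_nonneg c, hμ01]
  rw [hμdef]
  have : p i + C - 2 * lam - p i ≤ (f ∘ σ) 1 - (f ∘ σ) 0 := by linarith
  linarith
end

section
/- Let A be the (ℓ+1)×(ℓ+1) real symmetric tridiagonal matrix with diagonal entries p_0,...,p_ℓ and off-diagonal entries -λ (λ > 0). Suppose for some index i and C > 0: p_j ≥ p_i + C for all j ≠ i. Then the ground state (unit eigenvector of the smallest eigenvalue) v of A satisfies ‖α·e_i − v‖ ≤ 8λ/C for some scalar α with |α| = 1, where e_i is the i-th standard basis vector. -/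
/-- The Euclidean norm of a real vector. -/
noncomputable def vecNorm {N : ℕ} (v : Fin N → ℝ) : ℝ :=
  Real.sqrt (∑ j, v j ^ 2)

lemma aux_ind_sum_le_one {n : ℕ} (c : Fin n → Prop) [DecidablePred c]
    (h : ∀ a b : Fin n, c a → c b → a = b) :
    (∑ k : Fin n, if c k then (1:ℝ) else 0) ≤ 1 := by
  rw [Finset.sum_boole]
  have : (Finset.univ.filter c).card ≤ 1 := by
    apply Finset.card_le_one.mpr
    intro a ha b hb
    exact h a b (Finset.mem_filter.mp ha).2 (Finset.mem_filter.mp hb).2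
  exact_mod_cast this

lemma aux_adj_row_sum {n : ℕ} (j : Fin n) :
    (∑ k : Fin n, if ((j:ℕ)+1 = (k:ℕ) ∨ (k:ℕ)+1 = (j:ℕ)) then (1:ℝ) else 0) ≤ 2 := by
  have step : ∀ k : Fin n,
      (if ((j:ℕ)+1 = (k:ℕ) ∨ (k:ℕ)+1 = (j:ℕ)) then (1:ℝ) else 0) ≤
        (if ((j:ℕ)+1 = (k:ℕ)) then (1:ℝ) else 0) +
        (if ((k:ℕ)+1 = (j:ℕ)) then (1:ℝ) else 0) := by
    intro k; split_ifs <;> simp_all <;> norm_num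
  calc (∑ k : Fin n, if ((j:ℕ)+1 = (k:ℕ) ∨ (k:ℕ)+1 = (j:ℕ)) then (1:ℝ) else 0)
      ≤ ∑ k : Fin n, ((if ((j:ℕ)+1 = (k:ℕ)) then (1:ℝ) else 0) +
          (if ((k:ℕ)+1 = (j:ℕ)) then (1:ℝ) else 0)) := Finset.sum_le_sum fun k _ => step k
    _ = (∑ k : Fin n, if ((j:ℕ)+1 = (k:ℕ)) then (1:ℝ) else 0) +
        (∑ k : Fin n, if ((k:ℕ)+1 = (j:ℕ)) then (1:ℝ) else 0) := Finset.sum_add_distrib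
    _ ≤ 1 + 1 := by
        gcongr
        · exact aux_ind_sum_le_one _ (fun a b ha hb => Fin.ext (by omega))
        · exact aux_ind_sum_le_one _ (fun a b ha hb => Fin.ext (by omega))
    _ = 2 := by norm_num

set_option maxHeartbeats 1600000 in
/-- under `p j ≥ p i + C` for all `j ≠ i`, any unit ground state `v` of the
tridiagonal matrix satisfies `‖α • e_i − v‖ ≤ 8λ/C` for some `α` with `|α| = 1`. -/
theorem tridiag_ground_state_single (ℓ : ℕ) (hℓ : 1 ≤ ℓ) (p : Fin (ℓ + 1) → ℝ) (lam C : ℝ)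
    (hlam : 0 < lam) (hC : 0 < C) (i : Fin (ℓ + 1))
    (hp : ∀ j : Fin (ℓ + 1), j ≠ i → p j ≥ p i + C)
    (hA : (tridiag ℓ p lam).IsHermitian)
    (v : Fin (ℓ + 1) → ℝ) (hv : vecNorm v = 1)
    (hev : (tridiag ℓ p lam).mulVec v = sortedEigenvalues hA 0 • v) :
    ∃ α : ℝ, |α| = 1 ∧
      vecNorm (fun j => α * (if j = i then 1 else 0) - v j) ≤ 8 * lam / C := by
  set A := tridiag ℓ p lam with hAdef
  set μ := sortedEigenvalues hA 0 with hμdef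
  set w : Fin (ℓ+1) → Fin (ℓ+1) → ℝ :=
    fun j k => if ((j:ℕ)+1 = (k:ℕ) ∨ (k:ℕ)+1 = (j:ℕ)) then (1:ℝ) else 0 with hwdef
  set s : Fin (ℓ+1) → ℝ := fun j => ∑ k, w j k * v k with hsdef
  -- sum of squares of v is 1
  have h0 : (0:ℝ) ≤ ∑ j, v j ^ 2 := Finset.sum_nonneg fun j _ => sq_nonneg _
  have hsum : ∑ j, v j ^ 2 = 1 := by
    have h1 : Real.sqrt (∑ j, v j ^ 2) = 1 := hv
    nlinarith [Real.sq_sqrt h0]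
  have hvi2 : v i ^ 2 ≤ 1 := by
    rw [← hsum]
    exact Finset.single_le_sum (fun j _ => sq_nonneg (v j)) (Finset.mem_univ i)
  -- μ ≤ p i
  have hmin : ∀ k, μ ≤ hA.eigenvalues k := by
    intro k
    have h := Tuple.monotone_sort hA.eigenvalues
      (Fin.zero_le ((Tuple.sort hA.eigenvalues).symm k))
    simpa [hμdef, sortedEigenvalues] using h
  have hAii : A i i = ∑ k, hA.eigenvalues k * hA.eigenvectorBasis k i ^ 2 := by
    conv_lhs => rw [hA.spectral_theorem]
    simp [Matrix.mul_apply, Matrix.diagonal_apply, Matrix.conjTranspose_apply,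
      Finset.sum_mul, Matrix.star_apply]
    exact Finset.sum_congr rfl fun k _ => by ring
  have hrow : ∑ k, (hA.eigenvectorBasis k i : ℝ) ^ 2 = 1 := by
    have h := Matrix.mem_unitaryGroup_iff.mp (hA.eigenvectorUnitary).2
    have h2 := congrFun (congrFun h.symm i) i
    simpa [Matrix.mul_apply, Matrix.one_apply, Matrix.star_apply, sq] using h2.symm
  have hμle : μ ≤ p i := by
    have hApi : A i i = p i := by simp [hAdef, tridiag]
    calc μ = ∑ k, μ * hA.eigenvectorBasis k i ^ 2 := by
            rw [← Finset.mul_sum, hrow, mul_one]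
      _ ≤ ∑ k, hA.eigenvalues k * hA.eigenvectorBasis k i ^ 2 :=
            Finset.sum_le_sum fun k _ =>
              mul_le_mul_of_nonneg_right (hmin k) (sq_nonneg _)
      _ = A i i := hAii.symm
      _ = p i := hApi
  -- eigen equation componentwise
  have heq : ∀ j, (p j - μ) * v j = lam * s j := by
    intro j
    have h1 := congrFun hev j
    have h2 : ∑ k, A j k * v k = μ * v j := by
      simpa [Matrix.mulVec, dotProduct] using h1
    have h3 : ∀ k, A j k * v k = (if j = k then p j * v k else 0) - lam * (w j k * v k) := by
      intro k
      by_cases hjk : j = k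
      · subst hjk
        have hne : ¬(((j:ℕ)+1 = (j:ℕ)) ∨ ((j:ℕ)+1 = (j:ℕ))) := by omega
        simp [hAdef, tridiag, hwdef, hne]
      · simp only [hAdef, tridiag, Matrix.of_apply, hwdef, if_neg hjk]
        split_ifs <;> ring
    have h4 : ∑ k, A j k * v k = p j * v j - lam * s j := by
      rw [Finset.sum_congr rfl fun k _ => h3 k, Finset.sum_sub_distrib,
        Finset.sum_ite_eq Finset.univ j (fun k => p j * v k), ← Finset.mul_sum]
      simp [hsdef]
    rw [h4] at h2
    linarith [h2]
  -- bound on s j ^ 2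
  have hw01 : ∀ j k, w j k ^ 2 = w j k := by
    intro j k; simp only [hwdef]; split_ifs <;> norm_num
  have hwnn : ∀ j k, 0 ≤ w j k := by
    intro j k; simp only [hwdef]; split_ifs <;> norm_num
  have hsj : ∀ j, s j ^ 2 ≤ 2 * ∑ k, w j k * v k ^ 2 := by
    intro j
    have cs := Finset.sum_mul_sq_le_sq_mul_sq Finset.univ
      (fun k => w j k) (fun k => w j k * v k)
    have e1 : ∑ k, w j k * (w j k * v k) = s j := by
      rw [hsdef]
      refine Finset.sum_congr rfl fun k _ => ?_
      calc w j k * (w j k * v k) = w j k ^ 2 * v k := by ring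
        _ = w j k * v k := by rw [hw01]
    have e2 : ∀ k, (w j k * v k) ^ 2 = w j k * v k ^ 2 := by
      intro k; rw [mul_pow, hw01]
    rw [e1] at cs
    have e3 : ∑ k, (w j k * v k)^2 = ∑ k, w j k * v k ^2 :=
      Finset.sum_congr rfl fun k _ => e2 k
    rw [e3] at cs
    have hrowle : ∑ k, (w j k)^2 ≤ 2 := by
      have : ∑ k, (w j k)^2 = ∑ k, w j k := Finset.sum_congr rfl fun k _ => hw01 j k
      rw [this]; exact aux_adj_row_sum j
    have hnn : 0 ≤ ∑ k, w j k * v k ^ 2 :=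
      Finset.sum_nonneg fun k _ => mul_nonneg (hwnn j k) (sq_nonneg _)
    nlinarith
  have htot : ∑ j, s j ^ 2 ≤ 4 := by
    have hsym : ∀ j k, w j k = w k j := by
      intro j k; simp only [hwdef, or_comm]
    have step1 : ∑ j, s j ^ 2 ≤ 2 * ∑ j, ∑ k, w j k * v k ^ 2 := by
      rw [Finset.mul_sum]
      exact Finset.sum_le_sum fun j _ => hsj j
    have step2 : ∑ j, ∑ k, w j k * v k ^ 2 = ∑ k, (∑ j, w j k) * v k ^ 2 := by
      rw [Finset.sum_comm]
      exact Finset.sum_congr rfl fun k _ => by rw [Finset.sum_mul]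
    have step3 : ∑ k, (∑ j, w j k) * v k ^ 2 ≤ ∑ k, 2 * v k ^ 2 := by
      refine Finset.sum_le_sum fun k _ => mul_le_mul_of_nonneg_right ?_ (sq_nonneg _)
      have : ∑ j, w j k = ∑ j, w k j := Finset.sum_congr rfl fun j _ => hsym j k
      rw [this]; exact aux_adj_row_sum k
    have step4 : ∑ k, 2 * v k ^ 2 = 2 := by rw [← Finset.mul_sum, hsum, mul_one]
    linarith
  -- key bound
  have hkey : C^2 * (1 - v i ^ 2) ≤ 4 * lam ^ 2 := by
    have hoff : ∑ j ∈ Finset.univ.erase i, v j ^ 2 = 1 - v i ^ 2 := by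
      rw [Finset.sum_erase_eq_sub (Finset.mem_univ i), hsum]
    have hterm : ∀ j ∈ Finset.univ.erase i, C^2 * v j ^ 2 ≤ lam^2 * s j ^ 2 := by
      intro j hj
      have hji : j ≠ i := Finset.ne_of_mem_erase hj
      have hgap : C ≤ p j - μ := by have := hp j hji; linarith
      have hsq : ((p j - μ) * v j)^2 = (lam * s j)^2 := by rw [heq j]
      rw [mul_pow, mul_pow] at hsq
      have hC2 : C^2 ≤ (p j - μ)^2 := by nlinarith
      have := mul_le_mul_of_nonneg_right hC2 (sq_nonneg (v j))
      linarith
    have h5 : ∑ j ∈ Finset.univ.erase i, C^2 * v j ^2 ≤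
        ∑ j ∈ Finset.univ.erase i, lam^2 * s j ^ 2 := Finset.sum_le_sum hterm
    have h6 : ∑ j ∈ Finset.univ.erase i, lam^2 * s j ^2 ≤ ∑ j, lam^2 * s j ^ 2 := by
      apply Finset.sum_le_sum_of_subset_of_nonneg (Finset.erase_subset _ _)
      intro j _ _; positivity
    have h7 : ∑ j, lam^2 * s j ^2 ≤ lam^2 * 4 := by
      rw [← Finset.mul_sum]
      exact mul_le_mul_of_nonneg_left htot (sq_nonneg _)
    have h8 : ∑ j ∈ Finset.univ.erase i, C^2 * v j ^2 = C^2 * (1 - v i ^2) := by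
      rw [← Finset.mul_sum, hoff]
    linarith
  -- conclusion
  refine ⟨if 0 ≤ v i then 1 else -1, by split_ifs <;> simp, ?_⟩
  set α : ℝ := if 0 ≤ v i then 1 else -1 with hα
  have hα2 : α ^ 2 = 1 := by simp only [hα]; split_ifs <;> norm_num
  have hαv : α * v i = |v i| := by
    simp only [hα]; split_ifs with h
    · rw [one_mul, abs_of_nonneg h]
    · rw [abs_of_neg (lt_of_not_ge h)]; ring
  have hnorm2 : ∑ j, (α * (if j = i then 1 else 0) - v j)^2 = 2 - 2 * |v i| := by
    rw [← Finset.add_sum_erase _ _ (Finset.mem_univ i)]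
    have e1 : ∑ j ∈ Finset.univ.erase i, (α * (if j = i then 1 else 0) - v j)^2
        = ∑ j ∈ Finset.univ.erase i, v j ^ 2 := by
      refine Finset.sum_congr rfl fun j hj => ?_
      rw [if_neg (Finset.ne_of_mem_erase hj)]; ring
    rw [e1, Finset.sum_erase_eq_sub (Finset.mem_univ i), hsum, if_pos rfl]
    nlinarith [hαv, hα2]
  have habs : |v i| ≤ 1 := by nlinarith [sq_abs (v i), abs_nonneg (v i)]
  have hb1 : 2 - 2 * |v i| ≤ 2 * (1 - v i ^ 2) := by
    have : v i ^ 2 ≤ |v i| := by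
      rw [← sq_abs]; nlinarith [abs_nonneg (v i)]
    linarith
  have hb2 : 1 - v i ^ 2 ≤ 4 * lam ^2 / C ^2 := by
    rw [le_div_iff₀ (by positivity)]
    nlinarith [hkey]

  have hb3 : 2 - 2 * |v i| ≤ (8 * lam / C)^2 := by
    have : (8 * lam / C)^2 = 64 * lam^2 / C^2 := by field_simp; ring
    rw [this]
    have h9 : 8 * lam^2 / C^2 ≤ 64 * lam^2 / C^2 := by
      apply div_le_div_of_nonneg_right ?_ (by positivity)
      · nlinarith
    calc 2 - 2*|v i| ≤ 2 * (4 * lam^2 / C^2) := by linarith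
      _ = 8 * lam^2/C^2 := by ring
      _ ≤ 64 * lam^2/C^2 := h9
  rw [vecNorm]
  calc Real.sqrt (∑ j, (α * (if j = i then 1 else 0) - v j)^2)
      ≤ Real.sqrt ((8 * lam / C)^2) := by
        apply Real.sqrt_le_sqrt; rw [hnorm2]; exact hb3
    _ = 8 * lam / C := Real.sqrt_sq (by positivity)
end

section
/- Let A be the (ℓ+1)×(ℓ+1) real symmetric tridiagonal matrix with diagonal entries p_0,...,p_ℓ and off-diagonal entries -λ (λ > 0). Suppose for some i ∈ {1,...,ℓ}: |p_i − p_{i−1}| ≤ ε, and p_j ≥ max{p_{i−1}, p_i} + C for all j ∉ {i−1, i}, where C ≥ 4λ + ε. Then the spectral gap of A is at least 3λ/4. -/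
open Matrix Finset

section Helpers

variable {n : ℕ}

lemma tridiag_split (ℓ : ℕ) (p : Fin (ℓ+1) → ℝ) (lam : ℝ) (j k : Fin (ℓ+1)) :
    tridiag ℓ p lam j k
      = (if j = k then p j else 0) + (if (j:ℕ)+1 = (k:ℕ) then -lam else 0)
        + (if (k:ℕ)+1 = (j:ℕ) then -lam else 0) := by
  rcases j with ⟨j, hj⟩; rcases k with ⟨k, hk⟩
  simp only [tridiag, Matrix.of_apply, Fin.mk.injEq]
  split_ifs <;> first | ring1 | (exfalso; omega)

lemma tridiag_qf (ℓ : ℕ) (p : Fin (ℓ+1) → ℝ) (lam : ℝ) (x : Fin (ℓ+1) → ℝ) :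
    x ⬝ᵥ (tridiag ℓ p lam *ᵥ x)
      = (∑ j, p j * x j ^ 2) - 2 * lam * ∑ e : Fin ℓ, x e.castSucc * x e.succ := by
  have hsum : x ⬝ᵥ (tridiag ℓ p lam *ᵥ x)
      = ∑ j, ∑ k, x j * (tridiag ℓ p lam j k * x k) := by
    simp [dotProduct, Matrix.mulVec, Finset.mul_sum]
  rw [hsum]
  have : ∀ j k : Fin (ℓ+1), x j * (tridiag ℓ p lam j k * x k)
      = x j * ((if j = k then p j else 0) * x k)
        + x j * ((if (j:ℕ)+1 = (k:ℕ) then -lam else 0) * x k)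
        + x j * ((if (k:ℕ)+1 = (j:ℕ) then -lam else 0) * x k) := by
    intro j k; rw [tridiag_split]; ring
  simp only [this, Finset.sum_add_distrib]
  have T1 : ∑ j : Fin (ℓ+1), ∑ k : Fin (ℓ+1), x j * ((if j = k then p j else 0) * x k)
      = ∑ j, p j * x j ^ 2 := by
    apply Finset.sum_congr rfl
    intro j _
    rw [Finset.sum_eq_single j]
    · simp; ring
    · intro k _ hk; simp [Ne.symm hk]
    · simp
  have T2 : ∑ j : Fin (ℓ+1), ∑ k : Fin (ℓ+1), x j * ((if (j:ℕ)+1 = (k:ℕ) then -lam else 0) * x k)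
      = -lam * ∑ e : Fin ℓ, x e.castSucc * x e.succ := by
    rw [Finset.sum_comm, Fin.sum_univ_succ]
    have h0 : ∑ j : Fin (ℓ+1), x j * ((if (j:ℕ)+1 = ((0 : Fin (ℓ+1)):ℕ) then -lam else 0) * x 0) = 0 := by
      simp
    rw [h0, zero_add, Finset.mul_sum]
    apply Finset.sum_congr rfl
    intro e _
    rw [Finset.sum_eq_single e.castSucc]
    · simp [Fin.coe_castSucc, Fin.val_succ]; ring
    · intro j _ hj
      have : (j:ℕ) ≠ (e:ℕ) := fun h => hj (Fin.ext (by simpa using h))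
      simp [Fin.val_succ, this]
    · simp
  have T3 : ∑ j : Fin (ℓ+1), ∑ k : Fin (ℓ+1), x j * ((if (k:ℕ)+1 = (j:ℕ) then -lam else 0) * x k)
      = -lam * ∑ e : Fin ℓ, x e.castSucc * x e.succ := by
    rw [Fin.sum_univ_succ]
    have h0 : ∑ k : Fin (ℓ+1), x 0 * ((if (k:ℕ)+1 = ((0 : Fin (ℓ+1)):ℕ) then -lam else 0) * x k) = 0 := by
      simp
    rw [h0, zero_add, Finset.mul_sum]
    apply Finset.sum_congr rfl
    intro e _
    rw [Finset.sum_eq_single e.castSucc]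
    · simp [Fin.coe_castSucc, Fin.val_succ]; ring
    · intro k _ hk
      have : (k:ℕ) ≠ (e:ℕ) := fun h => hk (Fin.ext (by simpa using h))
      simp [Fin.val_succ, this]
    · simp
  rw [T1, T2, T3]; ring

lemma inner_eq_dot (v w : EuclideanSpace ℝ (Fin n)) :
    (inner ℝ v w : ℝ) = (v : Fin n → ℝ) ⬝ᵥ (w : Fin n → ℝ) := by
  simp [PiLp.inner_apply, RCLike.inner_apply, dotProduct, mul_comm]

lemma dot_expand {A : Matrix (Fin n) (Fin n) ℝ} (hA : A.IsHermitian)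
    (v w : Fin n → ℝ) :
    v ⬝ᵥ w = ∑ k, (v ⬝ᵥ ⇑(hA.eigenvectorBasis k)) * (⇑(hA.eigenvectorBasis k) ⬝ᵥ w) := by
  have := hA.eigenvectorBasis.sum_inner_mul_inner
    ((WithLp.equiv 2 _).symm v) ((WithLp.equiv 2 _).symm w)
  simp only [inner_eq_dot, WithLp.equiv_symm_apply, WithLp.ofLp_toLp] at this
  exact this.symm

lemma symm_dot {A : Matrix (Fin n) (Fin n) ℝ} (hA : A.IsHermitian)
    (v w : Fin n → ℝ) : v ⬝ᵥ (A *ᵥ w) = (A *ᵥ v) ⬝ᵥ w := by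
  rw [Matrix.dotProduct_mulVec, ← Matrix.mulVec_transpose]
  have : Aᵀ = A := by
    have := hA
    rwa [Matrix.IsHermitian, Matrix.conjTranspose_eq_transpose_of_trivial] at this
  rw [this]

lemma qf_expand {A : Matrix (Fin n) (Fin n) ℝ} (hA : A.IsHermitian)
    (v : Fin n → ℝ) :
    v ⬝ᵥ (A *ᵥ v) = ∑ k, hA.eigenvalues k * (⇑(hA.eigenvectorBasis k) ⬝ᵥ v)^2 := by
  rw [dot_expand hA]
  apply Finset.sum_congr rfl
  intro k _
  have h1 : ⇑(hA.eigenvectorBasis k) ⬝ᵥ (A *ᵥ v)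
      = hA.eigenvalues k * (⇑(hA.eigenvectorBasis k) ⬝ᵥ v) := by
    rw [symm_dot hA, hA.mulVec_eigenvectorBasis, smul_dotProduct]
    simp
  rw [h1, dotProduct_comm]
  ring

lemma norm_expand {A : Matrix (Fin n) (Fin n) ℝ} (hA : A.IsHermitian)
    (v : Fin n → ℝ) :
    v ⬝ᵥ v = ∑ k, (⇑(hA.eigenvectorBasis k) ⬝ᵥ v)^2 := by
  rw [dot_expand hA v v]
  apply Finset.sum_congr rfl
  intro k _
  rw [dotProduct_comm]; ring

lemma rayleigh_min {A : Matrix (Fin n) (Fin n) ℝ} (hA : A.IsHermitian)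
    {c : ℝ} (hc : ∀ k, c ≤ hA.eigenvalues k) (v : Fin n → ℝ) :
    c * (v ⬝ᵥ v) ≤ v ⬝ᵥ (A *ᵥ v) := by
  rw [qf_expand hA, norm_expand hA, Finset.mul_sum]
  apply Finset.sum_le_sum
  intro k _
  have := sq_nonneg (⇑(hA.eigenvectorBasis k) ⬝ᵥ v)
  nlinarith [hc k]

lemma sorted_min {A : Matrix (Fin (n+1)) (Fin (n+1)) ℝ} (hA : A.IsHermitian) (k : Fin (n+1)) :
    sortedEigenvalues hA 0 ≤ hA.eigenvalues k := by
  have h := Tuple.monotone_sort hA.eigenvalues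
    (show (0 : Fin (n+1)) ≤ (Tuple.sort hA.eigenvalues).symm k from Fin.zero_le _)
  simpa [sortedEigenvalues] using h

lemma second_ge {A : Matrix (Fin (n+1)) (Fin (n+1)) ℝ} (hA : A.IsHermitian)
    (h01 : (0 : Fin (n+1)) ≠ 1) (u : Fin (n+1) → ℝ) (t : ℝ)
    (hcore : ∀ x : Fin (n+1) → ℝ, x ⬝ᵥ u = 0 → t * (x ⬝ᵥ x) ≤ x ⬝ᵥ (A *ᵥ x)) :
    t ≤ sortedEigenvalues hA 1 := by
  set σ := Tuple.sort hA.eigenvalues with hσ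
  set k0 := σ 0
  set k1 := σ 1
  have hk : k0 ≠ k1 := fun h => h01 (σ.injective h)
  set b0 : Fin (n+1) → ℝ := ⇑(hA.eigenvectorBasis k0) with hb0
  set b1 : Fin (n+1) → ℝ := ⇑(hA.eigenvectorBasis k1) with hb1
  have orth := hA.eigenvectorBasis.orthonormal
  rw [orthonormal_iff_ite] at orth
  have h00 : b0 ⬝ᵥ b0 = 1 := by
    have := orth k0 k0; rwa [inner_eq_dot, if_pos rfl] at this
  have h11 : b1 ⬝ᵥ b1 = 1 := by
    have := orth k1 k1; rwa [inner_eq_dot, if_pos rfl] at this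
  have h01d : b0 ⬝ᵥ b1 = 0 := by
    have := orth k0 k1; rwa [inner_eq_dot, if_neg hk] at this
  have h10d : b1 ⬝ᵥ b0 = 0 := by rwa [dotProduct_comm] at h01d
  set c0 := b0 ⬝ᵥ u
  set c1 := b1 ⬝ᵥ u
  obtain ⟨α, β, hne, horth⟩ : ∃ α β : ℝ, ¬(α = 0 ∧ β = 0) ∧ α * c0 + β * c1 = 0 := by
    by_cases h : c0 = 0 ∧ c1 = 0
    · exact ⟨1, 0, by simp, by simp [h.1, h.2]⟩
    · refine ⟨-c1, c0, ?_, by ring⟩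
      rw [not_and_or] at h ⊢
      rcases h with h | h
      · right; exact h
      · left; simpa using h
  set x : Fin (n+1) → ℝ := α • b0 + β • b1 with hx
  have hxu : x ⬝ᵥ u = 0 := by
    rw [hx, add_dotProduct, smul_dotProduct, smul_dotProduct]
    simpa [smul_eq_mul] using horth
  have hxx : x ⬝ᵥ x = α^2 + β^2 := by
    rw [hx]
    simp only [add_dotProduct, dotProduct_add, smul_dotProduct,
      dotProduct_smul, smul_eq_mul, h00, h11, h01d, h10d]
    ring
  have hAx : A *ᵥ x = (α * hA.eigenvalues k0) • b0 + (β * hA.eigenvalues k1) • b1 := by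
    rw [hx, Matrix.mulVec_add, Matrix.mulVec_smul, Matrix.mulVec_smul,
      hA.mulVec_eigenvectorBasis, hA.mulVec_eigenvectorBasis, smul_smul, smul_smul]
  have hQ : x ⬝ᵥ (A *ᵥ x) = α^2 * hA.eigenvalues k0 + β^2 * hA.eigenvalues k1 := by
    rw [hAx, hx]
    simp only [add_dotProduct, dotProduct_add, smul_dotProduct,
      dotProduct_smul, smul_eq_mul, h00, h11, h01d, h10d]
    ring
  have hmono : hA.eigenvalues k0 ≤ hA.eigenvalues k1 := by
    have := Tuple.monotone_sort hA.eigenvalues (show (0 : Fin (n+1)) ≤ 1 from Fin.zero_le 1)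
    simpa using this
  have hpos : 0 < α^2 + β^2 := by
    rcases not_and_or.mp hne with h | h
    · have : 0 < α^2 := by positivity
      nlinarith [sq_nonneg β]
    · have : 0 < β^2 := by positivity
      nlinarith [sq_nonneg α]
  have hc := hcore x hxu
  rw [hxx, hQ] at hc
  have heq : sortedEigenvalues hA 1 = hA.eigenvalues k1 := rfl
  rw [heq]
  nlinarith [sq_nonneg α, sq_nonneg β, hmono]

lemma block_ineq (lam δ r y z : ℝ) (hlam : 0 < lam) (hr0 : 0 ≤ r)
    (hrsq : r^2 = lam^2 + δ^2/4) (hyz : lam*y + (r - δ/2)*z = 0) :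
    0 ≤ (r - δ/2 - 2*lam)*y^2 + (r + δ/2 - 2*lam)*z^2 - 2*lam*y*z := by
  have hrlam : lam ≤ r := by nlinarith [sq_nonneg δ]
  have hs0 : 0 < r + δ/2 := by nlinarith [sq_nonneg (r + δ/2), sq_nonneg (r - δ/2)]
  have hq0 : 0 < r - δ/2 := by nlinarith
  have key : lam^2*((r - δ/2 - 2*lam)*y^2 + (r + δ/2 - 2*lam)*z^2 - 2*lam*y*z)
      = 4*(r-δ/2)*r*(r-lam)*z^2 := by
    linear_combination (((r-δ/2) - 2*lam)*(lam*y + (r-δ/2)*z)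
        - 2*((r-δ/2)*z*((r-δ/2)-2*lam) + lam^2*z)) * hyz
      + z^2*(2*lam - 2*(r-δ/2) - (r+δ/2)) * hrsq
  have hN : 0 ≤ 4*(r-δ/2)*r*(r-lam)*z^2 := by
    have h1 : (0:ℝ) ≤ r - lam := by linarith
    have h2 : (0:ℝ) ≤ 4*(r-δ/2)*r := by positivity
    calc (0:ℝ) ≤ (4*(r-δ/2)*r)*((r-lam)*z^2) := mul_nonneg h2 (mul_nonneg h1 (sq_nonneg z))
    _ = 4*(r-δ/2)*r*(r-lam)*z^2 := by ring
  nlinarith [key, hN, mul_pos hlam hlam]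

end Helpers

set_option maxHeartbeats 2000000 in
/-- if `|p i − p (i−1)| ≤ ε` and `p j ≥ max (p (i−1)) (p i) + C` for all
`j ∉ {i−1, i}`, where `C ≥ 4λ + ε`, then the spectral gap of the tridiagonal matrix is at
least `3λ/4`. -/
theorem tridiag_gap_double (ℓ : ℕ) (p : Fin (ℓ + 1) → ℝ) (lam ε C : ℝ)
    (hlam : 0 < lam) (hε : 0 ≤ ε) (hC : C ≥ 4 * lam + ε)
    (i : ℕ) (hi1 : 1 ≤ i) (hi2 : i ≤ ℓ)
    (hnear : |p ⟨i, by omega⟩ - p ⟨i - 1, by omega⟩| ≤ ε)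
    (hfar : ∀ j : Fin (ℓ + 1), (j : ℕ) ≠ i → (j : ℕ) ≠ i - 1 →
      p j ≥ max (p ⟨i - 1, by omega⟩) (p ⟨i, by omega⟩) + C)
    (hA : (tridiag ℓ p lam).IsHermitian) :
    sortedEigenvalues hA 1 - sortedEigenvalues hA 0 ≥ 3 * lam / 4 := by
  have hℓ : 1 ≤ ℓ := le_trans hi1 hi2
  set ii' : Fin (ℓ+1) := ⟨i-1, by omega⟩ with hii'def
  set ii : Fin (ℓ+1) := ⟨i, by omega⟩ with hiidef
  have hne : ii ≠ ii' := by
    intro h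
    have := congrArg Fin.val h
    simp [hii'def, hiidef] at this
    omega
  set a := p ii' with ha
  set b := p ii with hb
  set r := Real.sqrt (lam^2 + (b-a)^2/4) with hrdef
  have hr0 : 0 ≤ r := Real.sqrt_nonneg _
  have hrsq : r^2 = lam^2 + (b-a)^2/4 := Real.sq_sqrt (by positivity)
  have hrlam : lam ≤ r := by nlinarith [sq_nonneg (b-a)]
  have habs : |(b-a)/2| ≤ r := by
    have h1 : Real.sqrt (((b-a)/2)^2) ≤ r := by
      apply Real.sqrt_le_sqrt
      nlinarith [sq_nonneg lam]
    rwa [Real.sqrt_sq_eq_abs] at h1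
  have hd1 : (b-a)/2 ≤ r := le_trans (le_abs_self _) habs
  have hd2 : -((b-a)/2) ≤ r := by
    have h1 := le_abs_self (-((b-a)/2))
    rw [abs_neg] at h1
    exact h1.trans habs
  have hqs : (r - (b-a)/2) * (r + (b-a)/2) = lam^2 := by linear_combination hrsq
  have hq0 : 0 < r - (b-a)/2 := by
    by_contra h
    push_neg at h
    have h2 : (0:ℝ) ≤ r + (b-a)/2 := by linarith
    have h3 := mul_nonneg (neg_nonneg.mpr h) h2
    nlinarith [mul_pos hlam hlam]
  -- the test vector
  set u : Fin (ℓ+1) → ℝ :=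
    fun j => if j = ii' then lam else if j = ii then (r - (b-a)/2) else 0 with hudef
  have hu1 : u ii' = lam := by simp [hudef]
  have hu2 : u ii = r - (b-a)/2 := by simp [hudef, hne]
  have hu0 : ∀ j, j ≠ ii' → j ≠ ii → u j = 0 := by
    intro j h1 h2; simp [hudef, h1, h2]
  -- two-point splitting of sums
  have split2 : ∀ f : Fin (ℓ+1) → ℝ,
      ∑ j, f j = f ii' + f ii + ∑ j ∈ (Finset.univ.erase ii).erase ii', f j := by
    intro f
    rw [← Finset.sum_erase_add _ _ (Finset.mem_univ ii),
      ← Finset.sum_erase_add _ _ (Finset.mem_erase.mpr ⟨Ne.symm hne, Finset.mem_univ ii'⟩)]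
    ring
  have hmem : ∀ j ∈ (Finset.univ.erase ii).erase ii', j ≠ ii' ∧ j ≠ ii := by
    intro j hj
    rcases Finset.mem_erase.mp hj with ⟨hj1, hj2⟩
    exact ⟨hj1, (Finset.mem_erase.mp hj2).1⟩
  -- the special edge
  set estar : Fin ℓ := ⟨i-1, by omega⟩ with hestar
  have hec : estar.castSucc = ii' := by
    apply Fin.ext; simp [hestar, hii'def]
  have hes : estar.succ = ii := by
    apply Fin.ext; simp [hestar, hiidef]; omega
  -- computations with u
  have hudot : u ⬝ᵥ u = lam^2 + (r - (b-a)/2)^2 := by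
    have h0 : u ⬝ᵥ u = ∑ j, u j * u j := rfl
    rw [h0, split2 (fun j => u j * u j)]
    have hrest : ∑ j ∈ (Finset.univ.erase ii).erase ii', u j * u j = 0 := by
      apply Finset.sum_eq_zero
      intro j hj
      rw [hu0 j (hmem j hj).1 (hmem j hj).2]; ring
    rw [hu1, hu2, hrest]; ring
  have huedge : ∑ e : Fin ℓ, u e.castSucc * u e.succ = lam * (r - (b-a)/2) := by
    rw [Finset.sum_eq_single estar]
    · rw [hec, hes, hu1, hu2]
    · intro e _ hne'
      have hv : (e : ℕ) ≠ i - 1 := by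
        intro h; exact hne' (Fin.ext (by simpa [hestar] using h))
      have hc1 : e.castSucc ≠ ii' := by
        intro h
        have := congrArg Fin.val h
        simp [hii'def] at this
        exact hv this
      by_cases hc2 : e.castSucc = ii
      · have he : (e:ℕ) = i := by
          have := congrArg Fin.val hc2
          simpa [hiidef] using this
        have hs1 : e.succ ≠ ii' := by
          intro h
          have := congrArg Fin.val h
          simp [Fin.val_succ, hii'def] at this
          omega
        have hs2 : e.succ ≠ ii := by
          intro h
          have := congrArg Fin.val h
          simp [Fin.val_succ, hiidef] at this
          omega
        rw [hu0 _ hs1 hs2]; ring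
      · rw [hu0 _ hc1 hc2]; ring
    · simp
  have hQu : u ⬝ᵥ (tridiag ℓ p lam *ᵥ u) = ((a+b)/2 - r) * (lam^2 + (r - (b-a)/2)^2) := by
    rw [tridiag_qf, huedge]
    have hdiag : ∑ j, p j * u j ^ 2 = a * lam^2 + b * (r - (b-a)/2)^2 := by
      rw [split2 (fun j => p j * u j ^ 2)]
      have hrest : ∑ j ∈ (Finset.univ.erase ii).erase ii', p j * u j ^ 2 = 0 := by
        apply Finset.sum_eq_zero
        intro j hj
        rw [hu0 j (hmem j hj).1 (hmem j hj).2]; ring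
      rw [hu1, hu2, hrest]; ring
    rw [hdiag]
    linear_combination (r - (b-a)/2) * hqs
  -- Step 1 : smallest sorted eigenvalue is at most (a+b)/2 - r
  have hupos : 0 < u ⬝ᵥ u := by
    rw [hudot]
    have : 0 < lam^2 := by positivity
    nlinarith [sq_nonneg (r - (b-a)/2)]
  have hstep1 : sortedEigenvalues hA 0 ≤ (a+b)/2 - r := by
    have h1 := rayleigh_min hA (fun k => sorted_min hA k) u
    rw [hQu, ← hudot] at h1
    exact le_of_mul_le_mul_right h1 hupos
  -- Step 2 : second sorted eigenvalue is at least (a+b)/2 - r + lam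
  have hcore : ∀ x : Fin (ℓ+1) → ℝ, x ⬝ᵥ u = 0 →
      ((a+b)/2 - r + lam) * (x ⬝ᵥ x) ≤ x ⬝ᵥ (tridiag ℓ p lam *ᵥ x) := by
    intro x hxu
    have hxu' : lam * x ii' + (r - (b-a)/2) * x ii = 0 := by
      have h0 : x ⬝ᵥ u = ∑ j, x j * u j := rfl
      rw [h0, split2 (fun j => x j * u j)] at hxu
      have hrest : ∑ j ∈ (Finset.univ.erase ii).erase ii', x j * u j = 0 := by
        apply Finset.sum_eq_zero
        intro j hj
        rw [hu0 j (hmem j hj).1 (hmem j hj).2]; ring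
      rw [hu1, hu2, hrest] at hxu
      linarith [hxu]
    have hT : x ⬝ᵥ x = ∑ j, x j ^ 2 := by
      have h0 : x ⬝ᵥ x = ∑ j, x j * x j := rfl
      rw [h0]; exact Finset.sum_congr rfl fun j _ => (sq (x j)).symm ▸ (by ring)
    rw [tridiag_qf, hT]
    -- edge sums
    have hedge : ∑ e : Fin ℓ, x e.castSucc * x e.succ
        = (∑ e ∈ Finset.univ.erase estar, x e.castSucc * x e.succ) + x ii' * x ii := by
      rw [← Finset.sum_erase_add _ _ (Finset.mem_univ estar), hec, hes]
    have hDP : 0 ≤ (∑ e ∈ Finset.univ.erase estar, ((x e.castSucc)^2 + (x e.succ)^2))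
        - 2 * ∑ e ∈ Finset.univ.erase estar, x e.castSucc * x e.succ := by
      have h1 : ∑ e ∈ Finset.univ.erase estar, ((x e.castSucc)^2 + (x e.succ)^2)
          - 2 * ∑ e ∈ Finset.univ.erase estar, x e.castSucc * x e.succ
          = ∑ e ∈ Finset.univ.erase estar, (x e.castSucc - x e.succ)^2 := by
        rw [Finset.mul_sum, ← Finset.sum_sub_distrib]
        exact Finset.sum_congr rfl fun e _ => by ring
      rw [h1]
      exact Finset.sum_nonneg fun e _ => sq_nonneg _
    have hD : ∑ e ∈ Finset.univ.erase estar, ((x e.castSucc)^2 + (x e.succ)^2)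
        = (∑ e : Fin ℓ, ((x e.castSucc)^2 + (x e.succ)^2)) - ((x ii')^2 + (x ii)^2) := by
      rw [← Finset.sum_erase_add _ _ (Finset.mem_univ estar), hec, hes]; ring
    have hFsplit : ∑ e : Fin ℓ, ((x e.castSucc)^2 + (x e.succ)^2)
        = (∑ e : Fin ℓ, (x e.castSucc)^2) + ∑ e : Fin ℓ, (x e.succ)^2 :=
      Finset.sum_add_distrib
    have hF1 : ∑ e : Fin ℓ, (x e.castSucc)^2 ≤ ∑ j, x j ^2 := by
      rw [Fin.sum_univ_castSucc (f := fun j => x j ^2)]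
      linarith [sq_nonneg (x (Fin.last ℓ))]
    have hF2 : ∑ e : Fin ℓ, (x e.succ)^2 ≤ ∑ j, x j ^2 := by
      rw [Fin.sum_univ_succ (f := fun j => x j ^2)]
      linarith [sq_nonneg (x 0)]
    -- diagonal sum bound
    have hP1 : a * (x ii')^2 + b * (x ii)^2
        + (2*lam + ((a+b)/2 - r + lam)) * ((∑ j, x j ^2) - (x ii')^2 - (x ii)^2)
        ≤ ∑ j, p j * x j ^ 2 := by
      rw [split2 (fun j => p j * x j ^ 2), split2 (fun j => x j ^ 2)]
      have hrest : ∑ j ∈ (Finset.univ.erase ii).erase ii',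
          (2*lam + ((a+b)/2 - r + lam)) * x j ^ 2
          ≤ ∑ j ∈ (Finset.univ.erase ii).erase ii', p j * x j ^ 2 := by
        apply Finset.sum_le_sum
        intro j hj
        have h1 : (j:ℕ) ≠ i := fun hv => (hmem j hj).2 (Fin.ext hv)
        have h2 : (j:ℕ) ≠ i - 1 := fun hv => (hmem j hj).1 (Fin.ext hv)
        have h3 := hfar j h1 h2
        have h4 : 2*lam + ((a+b)/2 - r + lam) ≤ p j := by
          have h5 := le_max_left a b
          have h6 := le_max_right a b
          linarith [hd1, hd2, hC, hε, hlam]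
        exact mul_le_mul_of_nonneg_right h4 (sq_nonneg _)
      rw [← Finset.mul_sum] at hrest
      linarith [hrest]
    -- block inequality
    have hblock := block_ineq lam (b-a) r (x ii') (x ii) hlam hr0 hrsq hxu'
    -- products with lam
    have m1 : 0 ≤ lam * ((∑ e ∈ Finset.univ.erase estar, ((x e.castSucc)^2 + (x e.succ)^2))
        - 2 * ∑ e ∈ Finset.univ.erase estar, x e.castSucc * x e.succ) :=
      mul_nonneg hlam.le hDP
    have m2 : 0 ≤ lam * (2 * (∑ j, x j ^2) - (x ii')^2 - (x ii)^2
        - (∑ e ∈ Finset.univ.erase estar, ((x e.castSucc)^2 + (x e.succ)^2))) := by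
      apply mul_nonneg hlam.le
      rw [hD]
      linarith [hF1, hF2, hFsplit]
    rw [hedge]
    linarith [hP1, m1, m2, hblock]
  have h01 : (0 : Fin (ℓ+1)) ≠ 1 := by
    intro h
    have := congrArg Fin.val h
    simp [Fin.val_zero, Fin.val_one'] at this
    omega
  have hstep2 := second_ge hA h01 u ((a+b)/2 - r + lam) hcore
  linarith [hstep1, hstep2, hlam]
end

section
/- Consider the ℓ-qubit diagonal operator Q := Δ·((ℓ−1)I + Z_1 − Z_ℓ − Σ_{i=1}^{ℓ−1} Z_i Z_{i+1}) with Δ > 0, where Z_i acts as Z on qubit i. For each computational basis state |x⟩ with x ∈ {0,1}^ℓ, the diagonal entry α_x := ⟨x|Q|x⟩ satisfies: α_x = 0 if x = 1^j 0^{ℓ−j} for some 0 ≤ j ≤ ℓ, and α_x ≥ Δ otherwise. -/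
/-- `(−1)^b`: the sign `⟨x|Z_i|x⟩ = (−1)^{x_i}` of a bit. -/
def bsign (b : Bool) : ℝ := if b then -1 else 1

/-- The diagonal entry `α_x = ⟨x|Q|x⟩` of the `(m+1)`-qubit diagonal operator
`Q = Δ((ℓ−1)I + Z_1 − Z_ℓ − Σ_{i=1}^{ℓ−1} Z_i Z_{i+1})` with `ℓ = m + 1` qubits. -/
def alphaQ (m : ℕ) (Δ : ℝ) (x : Fin (m + 1) → Bool) : ℝ :=
  Δ * ((m : ℝ) + bsign (x 0) - bsign (x (Fin.last m)) -
    ∑ i : Fin m, bsign (x i.castSucc) * bsign (x i.succ))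


/-- number of domain walls -/
def walls (m : ℕ) (x : Fin (m + 1) → Bool) : ℕ :=
  (Finset.univ.filter (fun i : Fin m => x i.castSucc ≠ x i.succ)).card

def bnat (b : Bool) : ℕ := if b then 1 else 0

lemma bsign_eq (b : Bool) : bsign b = 1 - 2 * (bnat b : ℝ) := by
  cases b <;> norm_num [bsign, bnat]

lemma bsign_mul (a b : Bool) :
    bsign a * bsign b = 1 - 2 * (if a ≠ b then (1:ℝ) else 0) := by
  cases a <;> cases b <;> norm_num [bsign]

lemma alphaQ_eq (m : ℕ) (Δ : ℝ) (x : Fin (m + 1) → Bool) :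
    alphaQ m Δ x =
      Δ * (2 * (walls m x : ℝ) + 2 * (bnat (x (Fin.last m)) : ℝ)
        - 2 * (bnat (x 0) : ℝ)) := by
  have hsum : ∑ i : Fin m, bsign (x i.castSucc) * bsign (x i.succ)
      = (m : ℝ) - 2 * (walls m x : ℝ) := by
    rw [Finset.sum_congr rfl (fun i _ => bsign_mul (x i.castSucc) (x i.succ))]
    rw [Finset.sum_sub_distrib, ← Finset.mul_sum, Finset.sum_boole, walls]
    simp
  rw [alphaQ, hsum, bsign_eq, bsign_eq]
  ring

lemma eq_of_no_wall (m : ℕ) (x : Fin (m+1) → Bool) (a : ℕ) (ha : a < m + 1)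
    (k : ℕ) (hk : k < m + 1) (hak : a ≤ k)
    (hwall : ∀ i : Fin m, a ≤ (i:ℕ) → (i:ℕ) < k → x i.castSucc = x i.succ) :
    x ⟨k, hk⟩ = x ⟨a, ha⟩ := by
  induction k with
  | zero =>
    have : a = 0 := by omega
    subst this; rfl
  | succ n ih =>
    rcases Nat.lt_or_ge a (n+1) with h | h
    · have hn : n < m := by omega
      have hw := hwall ⟨n, hn⟩ (by simpa using Nat.lt_succ_iff.mp h) (by simp)
      rw [Fin.castSucc_mk, Fin.succ_mk] at hw
      rw [← hw]
      exact ih (by omega) (by omega)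
        (fun i h1 h2 => hwall i h1 (by omega))
    · have : a = n + 1 := by omega
      subst this; rfl

lemma const_of_walls_zero (m : ℕ) (x : Fin (m+1) → Bool) (h : walls m x = 0)
    (i : Fin (m+1)) : x i = x 0 := by
  have hf : ∀ i : Fin m, x i.castSucc = x i.succ := by
    intro i
    by_contra hne
    have : i ∈ Finset.univ.filter (fun i : Fin m => x i.castSucc ≠ x i.succ) := by
      simp [hne]
    rw [Finset.card_eq_zero.mp h] at this
    exact absurd this (Finset.notMem_empty i)
  have := eq_of_no_wall m x 0 (by omega) i.val i.isLt (by omega)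
    (fun i' _ _ => hf i')
  simpa using this

lemma dw_of_le (m : ℕ) (x : Fin (m+1) → Bool)
    (h : walls m x + bnat (x (Fin.last m)) ≤ bnat (x 0)) :
    ∃ j : ℕ, ∀ i : Fin (m+1), x i = decide ((i : ℕ) < j) := by
  cases h0 : x 0 with
  | false =>
    rw [h0] at h
    simp [bnat] at h
    obtain ⟨hw, hl⟩ := h
    refine ⟨0, fun i => ?_⟩
    rw [const_of_walls_zero m x hw i, h0]
    simp
  | true =>
    cases hl : x (Fin.last m) with
    | true =>
      rw [h0, hl] at h
      simp [bnat] at h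
      refine ⟨m + 1, fun i => ?_⟩
      rw [const_of_walls_zero m x h i, h0]
      simp [i.isLt]
    | false =>
      rw [h0, hl] at h
      simp [bnat] at h
      -- walls ≤ 1, and walls ≠ 0
      have hw0 : walls m x ≠ 0 := by
        intro hw
        have := const_of_walls_zero m x hw (Fin.last m)
        rw [hl, h0] at this
        exact Bool.false_ne_true this
      have hw1 : walls m x = 1 := by omega
      obtain ⟨i0, hi0⟩ := Finset.card_eq_one.mp hw1
      have hmem : ∀ i : Fin m, (x i.castSucc ≠ x i.succ) ↔ i = i0 := by
        intro i
        constructor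
        · intro hne
          have : i ∈ Finset.univ.filter (fun i : Fin m => x i.castSucc ≠ x i.succ) := by
            simp [hne]
          rw [hi0] at this
          exact Finset.mem_singleton.mp this
        · intro hi; subst hi
          have : i ∈ ({i} : Finset (Fin m)) := Finset.mem_singleton_self i
          rw [← hi0] at this
          exact (Finset.mem_filter.mp this).2
      -- x k = true for k ≤ i0
      have htrue : ∀ k (hk : k < m + 1), k ≤ (i0 : ℕ) → x ⟨k, hk⟩ = true := by
        intro k hk hki
        have := eq_of_no_wall m x 0 (by omega) k hk (by omega)
          (fun i' _ h2 => by
            by_contra hne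
            have := (hmem i').mp hne
            subst this
            omega)
        rw [this]
        simpa using h0
      -- x ⟨i0+1⟩ = false
      have hfalse : x ⟨(i0 : ℕ) + 1, by omega⟩ = false := by
        have hne := (hmem i0).mpr rfl
        have hcs : x i0.castSucc = true := htrue i0 (by omega) le_rfl
        have : x i0.succ ≠ true := by
          rw [← hcs]; exact fun hh => hne hh.symm
        simpa [Fin.succ] using Bool.not_eq_true _ |>.mp this
      refine ⟨(i0 : ℕ) + 1, fun i => ?_⟩
      rcases Nat.lt_or_ge (i : ℕ) ((i0 : ℕ) + 1) with hlt | hge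
      · rw [show i = ⟨(i:ℕ), i.isLt⟩ from rfl, htrue (i:ℕ) i.isLt (by omega)]
        simp [hlt]
      · have := eq_of_no_wall m x ((i0:ℕ)+1) (by omega) (i:ℕ) i.isLt hge
          (fun i' h1 _ => by
            by_contra hne
            have := (hmem i').mp hne
            subst this
            omega)
        rw [show i = ⟨(i:ℕ), i.isLt⟩ from rfl, this, hfalse]
        simp; omega

lemma dw_walls (m : ℕ) (x : Fin (m+1) → Bool) (j : ℕ)
    (hx : ∀ i : Fin (m+1), x i = decide ((i : ℕ) < j)) :
    walls m x + bnat (x (Fin.last m)) = bnat (x 0) := by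
  have hxl : x (Fin.last m) = decide (m < j) := by simpa using hx (Fin.last m)
  have hx0 : x 0 = decide (0 < j) := by rw [hx 0]; simp; exact decide_eq_decide.mpr Iff.rfl
  have hwall : walls m x = if 1 ≤ j ∧ j ≤ m then 1 else 0 := by
    unfold walls
    split_ifs with hcond
    · rw [Finset.card_eq_one]
      refine ⟨⟨j-1, by omega⟩, ?_⟩
      ext i
      simp [hx, Fin.ext_iff, decide_eq_decide]
      omega
    · rw [Finset.card_eq_zero, Finset.filter_eq_empty_iff]
      intro i _
      simp [hx, decide_eq_decide]
      omega
  rw [hwall, hxl, hx0]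
  simp only [bnat]
  split_ifs <;> simp_all <;> omega

/-- `α_x = 0` if `x` is a domain-wall string `1^j 0^{ℓ−j}`, and `α_x ≥ Δ`
otherwise, provided `Δ > 0`. -/
theorem alphaQ_domain_wall (m : ℕ) (Δ : ℝ) (hΔ : 0 < Δ) (x : Fin (m + 1) → Bool) :
    (∀ j : ℕ, j ≤ m + 1 → (∀ i : Fin (m + 1), x i = decide ((i : ℕ) < j)) →
      alphaQ m Δ x = 0) ∧
    ((¬ ∃ j : ℕ, ∀ i : Fin (m + 1), x i = decide ((i : ℕ) < j)) →
      alphaQ m Δ x ≥ Δ) := by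
  constructor
  · intro j _ hx
    have h := dw_walls m x j hx
    have h' : (walls m x : ℝ) + (bnat (x (Fin.last m)) : ℝ) = (bnat (x 0) : ℝ) := by
      exact_mod_cast congrArg (Nat.cast : ℕ → ℝ) h
    rw [alphaQ_eq]
    linear_combination (2 * Δ) * h'
  · intro hne
    have hK : bnat (x 0) < walls m x + bnat (x (Fin.last m)) := by
      by_contra h
      push_neg at h
      exact hne (dw_of_le m x h)
    have h' : (bnat (x 0) : ℝ) + 1 ≤ (walls m x : ℝ) + (bnat (x (Fin.last m)) : ℝ) := by
      exact_mod_cast hK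
    rw [alphaQ_eq]
    nlinarith [hΔ]
end

section
/- Let D be an n-qubit diagonal Hermitian matrix and define Ď: [−1,1]^n → ℝ by Ď(ξ) = min{1, ξ_min/w}·⟨θ(ξ)|D|θ(ξ)⟩, where ξ_min = min_i |ξ_i|, θ(ξ)_i = 1 if ξ_i < 0 and 0 otherwise, and w ∈ (0,1) is a fixed constant. Then Ď is continuous on [−1,1]^n and Lipschitz with constant O(‖D‖/w). -/
/-- The box `[−1,1]^n` in Euclidean space. -/
def box (n : ℕ) : Set (EuclideanSpace ℝ (Fin n)) :=
  {ξ | ∀ i, ξ i ∈ Set.Icc (-1 : ℝ) 1}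

/-- The continuous interpolation `Ď(ξ) = min{1, ξ_min/w} · ⟨θ(ξ)|D|θ(ξ)⟩` of a diagonal
`(n+1)`-qubit Hamiltonian `D` (given by its diagonal entries `dD : (Fin (n+1) → Bool) → ℝ`),
where `ξ_min = minᵢ |ξᵢ|` and `θ(ξ)ᵢ = 1` iff `ξᵢ < 0`. -/
noncomputable def Dcheck (n : ℕ) (w : ℝ) (dD : (Fin (n + 1) → Bool) → ℝ)
    (ξ : EuclideanSpace ℝ (Fin (n + 1))) : ℝ :=
  min 1 ((Finset.univ.inf' Finset.univ_nonempty fun i => |ξ i|) / w) *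
    dD (fun i => decide (ξ i < 0))

/-- `Ď` is continuous on `[−1,1]^n` and Lipschitz with constant `O(‖D‖/w)`,
where `‖D‖ = max_x |⟨x|D|x⟩|`. -/
theorem Dcheck_continuous_lipschitz :
    ∃ C : ℝ, 0 < C ∧ ∀ (n : ℕ) (w : ℝ) (dD : (Fin (n + 1) → Bool) → ℝ),
      0 < w → w < 1 →
      ContinuousOn (Dcheck n w dD) (box (n + 1)) ∧
      LipschitzOnWith
        (Real.toNNReal (C * (Finset.univ.sup' Finset.univ_nonempty fun x => |dD x|) / w))
        (Dcheck n w dD) (box (n + 1)) := by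
  refine ⟨2, by norm_num, fun n w dD hw hw1 => ?_⟩
  set M := Finset.univ.sup' Finset.univ_nonempty fun x => |dD x| with hMdef
  have hMle : ∀ x, |dD x| ≤ M := fun x =>
    Finset.le_sup' (fun y => |dD y|) (Finset.mem_univ x)
  have hM0 : 0 ≤ M := le_trans (abs_nonneg _) (hMle (fun _ => false))
  set m : EuclideanSpace ℝ (Fin (n+1)) → ℝ :=
    fun ξ => Finset.univ.inf' Finset.univ_nonempty fun i => |ξ i| with hmdef
  have hm0 : ∀ ξ, 0 ≤ m ξ := by
    intro ξ
    apply Finset.le_inf'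
    intro i _
    exact abs_nonneg _
  have hmle : ∀ ξ i, m ξ ≤ |ξ i| := fun ξ i => Finset.inf'_le _ (Finset.mem_univ i)
  set g : EuclideanSpace ℝ (Fin (n+1)) → ℝ := fun ξ => min 1 (m ξ / w) with hgdef
  have hg0 : ∀ ξ, 0 ≤ g ξ := fun ξ => le_min zero_le_one (div_nonneg (hm0 ξ) hw.le)
  have hgle : ∀ ξ, g ξ ≤ m ξ / w := fun ξ => min_le_right _ _
  have hD : ∀ ζ, Dcheck n w dD ζ = g ζ * dD (fun i => decide (ζ i < 0)) := fun ζ => rfl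
  have minlip : ∀ a b : ℝ, min 1 a - min 1 b ≤ |a - b| := by
    intro a b
    rcases le_total 1 b with h | h
    · have h1 : min 1 b = 1 := min_eq_left h
      have h2 : min 1 a ≤ 1 := min_le_left _ _
      have := abs_nonneg (a - b)
      linarith
    · have h1 : min 1 b = b := min_eq_right h
      have h2 : min 1 a ≤ a := min_le_right _ _
      have := le_abs_self (a - b)
      linarith
  have key : ∀ ξ η : EuclideanSpace ℝ (Fin (n+1)),
      dist (Dcheck n w dD ξ) (Dcheck n w dD η) ≤ (2 * M / w) * dist ξ η := by
    intro ξ η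
    have hd0 : (0:ℝ) ≤ dist ξ η := dist_nonneg
    have hcoord : ∀ i, |ξ i - η i| ≤ dist ξ η := by
      intro i
      calc |ξ i - η i| = dist (ξ i) (η i) := (Real.dist_eq _ _).symm
        _ ≤ dist (WithLp.equiv 2 _ ξ) (WithLp.equiv 2 _ η) := dist_le_pi_dist _ _ i
        _ ≤ dist ξ η := by simpa using (PiLp.lipschitzWith_ofLp 2 _).dist_le_mul ξ η
    have hmlip : |m ξ - m η| ≤ dist ξ η := by
      rw [abs_sub_le_iff]
      constructor
      · obtain ⟨i, _, hi⟩ := Finset.exists_mem_eq_inf' (Finset.univ_nonempty) fun i => |η i|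
        have h1 : m ξ ≤ |ξ i| := hmle ξ i
        have h2 : |ξ i| - |η i| ≤ |ξ i - η i| := abs_sub_abs_le_abs_sub _ _
        have h3 := hcoord i
        have hη : m η = |η i| := hi
        linarith
      · obtain ⟨i, _, hi⟩ := Finset.exists_mem_eq_inf' (Finset.univ_nonempty) fun i => |ξ i|
        have h1 : m η ≤ |η i| := hmle η i
        have h2 : |η i| - |ξ i| ≤ |η i - ξ i| := abs_sub_abs_le_abs_sub _ _
        have h3 := hcoord i
        have hξ : m ξ = |ξ i| := hi
        rw [abs_sub_comm] at h2
        linarith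
    have hglip : |g ξ - g η| ≤ dist ξ η / w := by
      have h1 : |g ξ - g η| ≤ |m ξ / w - m η / w| := by
        rw [abs_sub_le_iff]
        refine ⟨minlip _ _, ?_⟩
        rw [abs_sub_comm (m ξ / w)]
        exact minlip _ _
      have h2 : |m ξ / w - m η / w| = |m ξ - m η| / w := by
        rw [div_sub_div_same, abs_div, abs_of_pos hw]
      rw [h2] at h1
      exact h1.trans ((div_le_div_iff_of_pos_right hw).mpr hmlip)
    rw [hD ξ, hD η, Real.dist_eq]
    by_cases hθ : (fun i => decide (ξ i < 0)) = (fun i => decide (η i < 0))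
    · rw [hθ, ← sub_mul, abs_mul]
      calc |g ξ - g η| * |dD (fun i => decide (η i < 0))|
          ≤ (dist ξ η / w) * M := by
            apply mul_le_mul hglip (hMle _) (abs_nonneg _)
            exact div_nonneg hd0 hw.le
        _ ≤ 2 * M / w * dist ξ η := by
            rw [div_mul_eq_mul_div, mul_comm, div_mul_eq_mul_div]
            apply (div_le_div_iff_of_pos_right hw).mpr
            nlinarith
    · obtain ⟨i, hi⟩ : ∃ i, decide (ξ i < 0) ≠ decide (η i < 0) := by
        by_contra h
        push_neg at h
        exact hθ (funext h)
    -- in this case both |ξ i| and |η i| are at most |ξ i - η i|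
      have hsign : |ξ i| ≤ |ξ i - η i| ∧ |η i| ≤ |ξ i - η i| := by
        by_cases hξi : ξ i < 0
        · have hηi : ¬ η i < 0 := by
            intro h; apply hi; simp [hξi, h]
          push_neg at hηi
          rw [abs_of_neg hξi, abs_of_nonneg hηi, abs_of_nonpos (by linarith)]
          constructor <;> linarith
        · have hηi : η i < 0 := by
            by_contra h; apply hi; simp [hξi, h]
          push_neg at hξi
          rw [abs_of_nonneg hξi, abs_of_neg hηi, abs_of_nonneg (by linarith)]
          constructor <;> linarith
      have hmd1 : m ξ ≤ dist ξ η := le_trans (hmle ξ i) (le_trans hsign.1 (hcoord i))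
      have hmd2 : m η ≤ dist ξ η := le_trans (hmle η i) (le_trans hsign.2 (hcoord i))
      have b1 : |g ξ * dD (fun i => decide (ξ i < 0))| ≤ (dist ξ η / w) * M := by
        rw [abs_mul, abs_of_nonneg (hg0 ξ)]
        apply mul_le_mul _ (hMle _) (abs_nonneg _) (div_nonneg hd0 hw.le)
        exact le_trans (hgle ξ) ((div_le_div_iff_of_pos_right hw).mpr hmd1)
      have b2 : |g η * dD (fun i => decide (η i < 0))| ≤ (dist ξ η / w) * M := by
        rw [abs_mul, abs_of_nonneg (hg0 η)]
        apply mul_le_mul _ (hMle _) (abs_nonneg _) (div_nonneg hd0 hw.le)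
        exact le_trans (hgle η) ((div_le_div_iff_of_pos_right hw).mpr hmd2)
      calc |g ξ * dD (fun i => decide (ξ i < 0)) - g η * dD (fun i => decide (η i < 0))|
          ≤ |g ξ * dD (fun i => decide (ξ i < 0))| + |g η * dD (fun i => decide (η i < 0))| :=
            abs_sub _ _
        _ ≤ (dist ξ η / w) * M + (dist ξ η / w) * M := add_le_add b1 b2
        _ = 2 * M / w * dist ξ η := by ring
  have hlip : LipschitzOnWith
      (Real.toNNReal (2 * M / w)) (Dcheck n w dD) (box (n + 1)) := by
    rw [lipschitzOnWith_iff_dist_le_mul]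
    intro x _ y _
    rw [Real.coe_toNNReal _ (by positivity)]
    exact key x y
  exact ⟨hlip.continuousOn, hlip⟩
end

section
/- Let H be a Hermitian matrix with a nondegenerate ground state |g⟩ (minimal eigenvalue, with spectral gap δ > 0 to the rest of the spectrum). Suppose a Hermitian matrix H_sim together with isometry E simulates H with error (ε_enc, ε): i.e., there exists an isometry Ẽ whose image is the span of the eigenvectors of H_sim for its N smallest eigenvalues (N = dim of H's space), ‖H − Ẽ†H_sim Ẽ‖ ≤ ε, and ‖E − Ẽ‖ ≤ ε_enc. Then the spectral gap of H_sim is at least δ − 2ε. -/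
open Matrix

/-- The ℓ² operator norm of a (possibly rectangular) complex matrix. -/
noncomputable def opNormRect {m n : ℕ} (A : Matrix (Fin m) (Fin n) ℂ) : ℝ :=
  ‖LinearMap.toContinuousLinearMap (Matrix.toEuclideanLin A)‖

open scoped InnerProductSpace ComplexConjugate

lemma norm_sq_sum' {N : ℕ} (w : EuclideanSpace ℂ (Fin N)) : ∑ j, ‖w j‖^2 = ‖w‖^2 := by
  have h : ⟪w, w⟫_ℂ = ((∑ j, ‖w j‖^2 : ℝ) : ℂ) := by
    simp [PiLp.inner_apply, RCLike.inner_apply, RCLike.conj_mul]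
    exact_mod_cast EuclideanSpace.norm_sq_eq w
  have h3 := congrArg Complex.re ((h.symm.trans (inner_self_eq_norm_sq_to_K (𝕜 := ℂ) w)))
  simpa [← Complex.ofReal_pow] using h3

lemma parseval' {N : ℕ} (b : OrthonormalBasis (Fin N) ℂ (EuclideanSpace ℂ (Fin N)))
    (w : EuclideanSpace ℂ (Fin N)) : ∑ i, ‖⟪b i, w⟫_ℂ‖^2 = ‖w‖^2 := by
  have h := b.sum_inner_mul_inner w w
  have h2 : ∀ i, ⟪w, b i⟫_ℂ * ⟪b i, w⟫_ℂ = ((‖⟪b i, w⟫_ℂ‖^2 : ℝ) : ℂ) := by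
    intro i
    rw [← inner_conj_symm w (b i), RCLike.conj_mul, ← RCLike.ofReal_pow]
    show ((‖⟪b i, w⟫_ℂ‖^2 : ℝ) : ℂ) = _
    norm_cast
  rw [Finset.sum_congr rfl (fun i _ => h2 i), inner_self_eq_norm_sq_to_K] at h
  have h3 := congrArg Complex.re h
  simpa [← Complex.ofReal_pow, ← Complex.ofReal_sum] using h3

lemma eigvec_apply' {N : ℕ} {A : Matrix (Fin N) (Fin N) ℂ} (hA : A.IsHermitian) (i : Fin N) :
    Matrix.toEuclideanLin A (hA.eigenvectorBasis i) = (hA.eigenvalues i : ℂ) • hA.eigenvectorBasis i := by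
  ext j
  have := congrFun (hA.mulVec_eigenvectorBasis i) j
  simpa [Matrix.toEuclideanLin_apply, Complex.real_smul] using this

lemma rayleigh' {N : ℕ} {A : Matrix (Fin N) (Fin N) ℂ} (hA : A.IsHermitian)
    (w : EuclideanSpace ℂ (Fin N)) :
    (⟪w, Matrix.toEuclideanLin A w⟫_ℂ).re
      = ∑ i, hA.eigenvalues i * ‖⟪hA.eigenvectorBasis i, w⟫_ℂ‖^2 := by
  set b := hA.eigenvectorBasis with hb
  have hsymm := (Matrix.isHermitian_iff_isSymmetric.1 hA)
  have h := b.sum_inner_mul_inner w (Matrix.toEuclideanLin A w)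
  have h2 : ∀ i, ⟪w, b i⟫_ℂ * ⟪b i, Matrix.toEuclideanLin A w⟫_ℂ
      = (((hA.eigenvalues i * ‖⟪b i, w⟫_ℂ‖^2 : ℝ)) : ℂ) := by
    intro i
    rw [← hsymm (b i) w, eigvec_apply' hA i, inner_smul_left, Complex.conj_ofReal,
      show ⟪w, b i⟫_ℂ * ((hA.eigenvalues i : ℂ) * ⟪b i, w⟫_ℂ)
        = (hA.eigenvalues i : ℂ) * (⟪w, b i⟫_ℂ * ⟪b i, w⟫_ℂ) by ring,
      ← inner_conj_symm w (b i), RCLike.conj_mul, ← RCLike.ofReal_pow]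
    show (hA.eigenvalues i : ℂ) * ((‖⟪b i, w⟫_ℂ‖^2 : ℝ) : ℂ) = _
    push_cast; ring
  rw [Finset.sum_congr rfl (fun i _ => h2 i)] at h
  have h3 := congrArg Complex.re h.symm
  simpa [← Complex.ofReal_pow, ← Complex.ofReal_sum] using h3

lemma re_inner_le' {n : ℕ} (A : Matrix (Fin n) (Fin n) ℂ) (v : EuclideanSpace ℂ (Fin n)) :
    |(⟪v, Matrix.toEuclideanLin A v⟫_ℂ).re| ≤ opNormRect A * ‖v‖^2 := by
  have h1 : |(⟪v, Matrix.toEuclideanLin A v⟫_ℂ).re| ≤ ‖⟪v, Matrix.toEuclideanLin A v⟫_ℂ‖ := by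
    exact Complex.abs_re_le_norm _
  have h2 := norm_inner_le_norm (𝕜 := ℂ) v (Matrix.toEuclideanLin A v)
  have h3 : ‖Matrix.toEuclideanLin A v‖ ≤ opNormRect A * ‖v‖ :=
    (LinearMap.toContinuousLinearMap (Matrix.toEuclideanLin A)).le_opNorm v
  nlinarith [norm_nonneg v, norm_nonneg (Matrix.toEuclideanLin A v)]

lemma diag_apply' {N : ℕ} (d : Fin N → ℝ) (w : EuclideanSpace ℂ (Fin N)) (j : Fin N) :
    (Matrix.toEuclideanLin (Matrix.diagonal (fun i => (d i : ℂ))) w) j = (d j : ℂ) * w j := by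
  simp [Matrix.toEuclideanLin_apply, Matrix.mulVec_diagonal]

lemma inner_diag' {N : ℕ} (d : Fin N → ℝ) (w : EuclideanSpace ℂ (Fin N)) :
    (⟪w, Matrix.toEuclideanLin (Matrix.diagonal (fun i => (d i : ℂ))) w⟫_ℂ).re
      = ∑ j, d j * ‖w j‖^2 := by
  rw [PiLp.inner_apply]
  have hterm : ∀ j, ⟪w j, (Matrix.toEuclideanLin (Matrix.diagonal (fun i => (d i : ℂ))) w) j⟫_ℂ
      = ((d j * ‖w j‖^2 : ℝ) : ℂ) := by
    intro j
    rw [RCLike.inner_apply, diag_apply',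
      show (d j : ℂ) * w j * (starRingEnd ℂ) (w j)
        = (d j : ℂ) * ((starRingEnd ℂ) (w j) * w j) by ring,
      RCLike.conj_mul, ← RCLike.ofReal_pow]
    show (d j : ℂ) * ((‖w j‖^2 : ℝ) : ℂ) = _
    push_cast; ring
  rw [Finset.sum_congr rfl (fun j _ => hterm j), ← Complex.ofReal_sum]
  simp [← Complex.ofReal_pow]

/-- if `(H_sim, E)` simulates `H` with error `(ε_enc, ε)`, where `H` has a
nondegenerate ground state with spectral gap `δ` — the isometry `Ẽ` having image the
low-energy subspace of `H_sim` (its columns are orthonormal eigenvectors for the `N` smallest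
eigenvalues of `H_sim`), with `‖H − Ẽ† H_sim Ẽ‖ ≤ ε` and `‖E − Ẽ‖ ≤ ε_enc` — then the
spectral gap of `H_sim` is at least `δ − 2ε`. -/
theorem simulation_gap (N M : ℕ) (hN : 2 ≤ N) (hNM : N ≤ M)
    (H : Matrix (Fin N) (Fin N) ℂ) (Hsim : Matrix (Fin M) (Fin M) ℂ)
    (hH : H.IsHermitian) (hSim : Hsim.IsHermitian)
    (δ ε εenc : ℝ) (hδ : 0 < δ) (hε : 0 ≤ ε) (henc : 0 ≤ εenc)
    (hgap : sortedEigenvalues hH ⟨1, by omega⟩ - sortedEigenvalues hH ⟨0, by omega⟩ ≥ δ)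
    (E Et : Matrix (Fin M) (Fin N) ℂ)
    (hE : Eᴴ * E = 1) (hEt : Etᴴ * Et = 1)
    (hlow : ∀ j : Fin N, Hsim.mulVec (fun i => Et i j) =
      ((sortedEigenvalues hSim (Fin.castLE hNM j) : ℝ) : ℂ) • fun i => Et i j)
    (hHapprox : opNormRect (H - Etᴴ * Hsim * Et) ≤ ε)
    (hEapprox : opNormRect (E - Et) ≤ εenc) :
    sortedEigenvalues hSim ⟨1, by omega⟩ - sortedEigenvalues hSim ⟨0, by omega⟩ ≥
      δ - 2 * ε := by
  classical
  have hlamMono : Monotone (sortedEigenvalues hSim) := Tuple.monotone_sort _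
  have hmuMono : Monotone (sortedEigenvalues hH) := Tuple.monotone_sort _
  set i0 : Fin N := ⟨0, by omega⟩ with hi0
  set i1 : Fin N := ⟨1, by omega⟩ with hi1
  set d : Fin N → ℝ := fun k => sortedEigenvalues hSim (Fin.castLE hNM k) with hd
  have hdMono : Monotone d := fun a c hac =>
    hlamMono (show Fin.castLE hNM a ≤ Fin.castLE hNM c from hac)
  -- the compression is diagonal
  have hD : Etᴴ * Hsim * Et = Matrix.diagonal (fun k => ((d k : ℝ) : ℂ)) := by
    ext j k
    rw [Matrix.mul_assoc, Matrix.mul_apply]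
    have hcol : ∀ i, (Hsim * Et) i k = ((d k : ℝ) : ℂ) * Et i k := by
      intro i
      have h := congrFun (hlow k) i
      simpa [Matrix.mulVec, dotProduct, Matrix.mul_apply, hd] using h
    calc ∑ i, Etᴴ j i * (Hsim * Et) i k
        = ((d k : ℝ) : ℂ) * ∑ i, Etᴴ j i * Et i k := by
          rw [Finset.mul_sum]
          exact Finset.sum_congr rfl fun i _ => by rw [hcol i]; ring
      _ = ((d k : ℝ) : ℂ) * (1 : Matrix (Fin N) (Fin N) ℂ) j k := by
          rw [← Matrix.mul_apply, hEt]
      _ = Matrix.diagonal (fun k => ((d k : ℝ) : ℂ)) j k := by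
          by_cases h : j = k
          · subst h; simp
          · simp [Matrix.one_apply_ne h, Matrix.diagonal_apply_ne _ h]
  set σ : Equiv.Perm (Fin N) := Tuple.sort hH.eigenvalues with hσ
  have hμσ : ∀ i : Fin N, hH.eigenvalues (σ i) = sortedEigenvalues hH i := fun i => rfl
  set g : EuclideanSpace ℂ (Fin N) := hH.eigenvectorBasis (σ i0) with hg
  have hgnorm : ‖g‖ = 1 := hH.eigenvectorBasis.orthonormal.1 _
  set R : Matrix (Fin N) (Fin N) ℂ := H - Etᴴ * Hsim * Et with hR
  have hsplit : ∀ v : EuclideanSpace ℂ (Fin N),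
      (⟪v, Matrix.toEuclideanLin H v⟫_ℂ).re
      = (⟪v, Matrix.toEuclideanLin (Matrix.diagonal (fun k => ((d k : ℝ) : ℂ))) v⟫_ℂ).re
        + (⟪v, Matrix.toEuclideanLin R v⟫_ℂ).re := by
    intro v
    have hm : Matrix.toEuclideanLin H v
        = Matrix.toEuclideanLin (Matrix.diagonal (fun k => ((d k : ℝ) : ℂ))) v
          + Matrix.toEuclideanLin R v := by
      rw [hR, ← hD, map_sub]
      simp
    rw [hm, inner_add_right]
    simp
  have hRbound : ∀ v : EuclideanSpace ℂ (Fin N),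
      |(⟪v, Matrix.toEuclideanLin R v⟫_ℂ).re| ≤ ε * ‖v‖ ^ 2 := by
    intro v
    refine (re_inner_le' R v).trans ?_
    have h1 : opNormRect R ≤ ε := hHapprox
    nlinarith [sq_nonneg ‖v‖]
  -- (a)  d i0 ≤ μ₀ + ε
  have ha : d i0 ≤ sortedEigenvalues hH i0 + ε := by
    have h1 : (⟪g, Matrix.toEuclideanLin H g⟫_ℂ).re = sortedEigenvalues hH i0 := by
      rw [hg, eigvec_apply' hH (σ i0), inner_smul_right, inner_self_eq_norm_sq_to_K,
        ← hg, hgnorm, hμσ]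
      simp
    have h2 : d i0 ≤ (⟪g, Matrix.toEuclideanLin
        (Matrix.diagonal (fun k => ((d k : ℝ) : ℂ))) g⟫_ℂ).re := by
      rw [inner_diag' d g]
      have hterm : ∀ j : Fin N, d i0 * ‖g j‖ ^ 2 ≤ d j * ‖g j‖ ^ 2 := by
        intro j
        have : d i0 ≤ d j := hdMono (by simp [hi0, Fin.le_def])
        nlinarith [sq_nonneg ‖g j‖]
      calc d i0 = d i0 * ∑ j, ‖g j‖ ^ 2 := by rw [norm_sq_sum', hgnorm]; ring
        _ = ∑ j, d i0 * ‖g j‖ ^ 2 := Finset.mul_sum _ _ _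
        _ ≤ ∑ j, d j * ‖g j‖ ^ 2 := Finset.sum_le_sum fun j _ => hterm j
    have h3 := hRbound g
    rw [hgnorm] at h3
    have h4 := hsplit g
    have h5 := abs_le.mp h3
    have h6 : ε * 1 ^ 2 = ε := by ring
    rw [h6] at h5
    linarith [h5.1, h5.2]
  -- (b)  μ₁ ≤ d i1 + ε, via any nonzero w supported on {i0, i1} orthogonal to g
  have key : ∀ w : EuclideanSpace ℂ (Fin N), w ≠ 0 →
      (∀ j, j ≠ i0 → j ≠ i1 → w j = 0) → ⟪g, w⟫_ℂ = 0 →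
      sortedEigenvalues hH i1 ≤ d i1 + ε := by
    intro w hw0 hsupp hperp
    have hwn : ‖w‖ ≠ 0 := fun h => hw0 (norm_eq_zero.mp h)
    have hwpos : (0 : ℝ) < ‖w‖ ^ 2 := by positivity
    have hH1 : sortedEigenvalues hH i1 * ‖w‖ ^ 2
        ≤ (⟪w, Matrix.toEuclideanLin H w⟫_ℂ).re := by
      rw [rayleigh' hH w]
      have hterm : ∀ i : Fin N, sortedEigenvalues hH i1 * ‖⟪hH.eigenvectorBasis i, w⟫_ℂ‖ ^ 2
          ≤ hH.eigenvalues i * ‖⟪hH.eigenvectorBasis i, w⟫_ℂ‖ ^ 2 := by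
        intro i
        by_cases h : i = σ i0
        · subst h
          rw [show ⟪hH.eigenvectorBasis (σ i0), w⟫_ℂ = ⟪g, w⟫_ℂ from rfl, hperp]
          simp
        · have hne : σ.symm i ≠ i0 := fun hc => h (by rw [← hc, Equiv.apply_symm_apply])
          have hv : (σ.symm i).val ≠ 0 := by
            intro hc; exact hne (by rw [hi0]; exact Fin.ext hc)
          have hle : i1 ≤ σ.symm i := by
            rw [hi1, Fin.le_def]
            simpa using Nat.one_le_iff_ne_zero.mpr hv
          have h6 : sortedEigenvalues hH i1 ≤ hH.eigenvalues i := by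
            have h7 := hmuMono hle
            have h9 : sortedEigenvalues hH (σ.symm i) = hH.eigenvalues i := by
              rw [← hμσ (σ.symm i), Equiv.apply_symm_apply]
            rwa [h9] at h7
          nlinarith [sq_nonneg ‖⟪hH.eigenvectorBasis i, w⟫_ℂ‖]
      calc sortedEigenvalues hH i1 * ‖w‖ ^ 2
          = sortedEigenvalues hH i1 * ∑ i, ‖⟪hH.eigenvectorBasis i, w⟫_ℂ‖ ^ 2 := by
            rw [parseval']
        _ = ∑ i, sortedEigenvalues hH i1 * ‖⟪hH.eigenvectorBasis i, w⟫_ℂ‖ ^ 2 :=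
            Finset.mul_sum _ _ _
        _ ≤ ∑ i, hH.eigenvalues i * ‖⟪hH.eigenvectorBasis i, w⟫_ℂ‖ ^ 2 :=
            Finset.sum_le_sum fun i _ => hterm i
    have hD1 : (⟪w, Matrix.toEuclideanLin
        (Matrix.diagonal (fun k => ((d k : ℝ) : ℂ))) w⟫_ℂ).re ≤ d i1 * ‖w‖ ^ 2 := by
      rw [inner_diag' d w]
      have hterm : ∀ j : Fin N, d j * ‖w j‖ ^ 2 ≤ d i1 * ‖w j‖ ^ 2 := by
        intro j
        by_cases hj : w j = 0
        · simp [hj]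
        · have hj2 : j = i0 ∨ j = i1 := by
            by_contra hc
            push_neg at hc
            exact hj (hsupp j hc.1 hc.2)
          have hlej : d j ≤ d i1 := by
            rcases hj2 with h | h
            · subst h; exact hdMono (by simp [hi0, hi1, Fin.le_def])
            · subst h; exact le_refl _
          nlinarith [sq_nonneg ‖w j‖]
      calc ∑ j, d j * ‖w j‖ ^ 2 ≤ ∑ j, d i1 * ‖w j‖ ^ 2 :=
            Finset.sum_le_sum fun j _ => hterm j
        _ = d i1 * ∑ j, ‖w j‖ ^ 2 := (Finset.mul_sum _ _ _).symm
        _ = d i1 * ‖w‖ ^ 2 := by rw [norm_sq_sum']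
    have h3 := hRbound w
    have h4 := hsplit w
    have h5 := abs_le.mp h3
    have hexp : (d i1 + ε) * ‖w‖ ^ 2 = d i1 * ‖w‖ ^ 2 + ε * ‖w‖ ^ 2 := by ring
    have h8 : sortedEigenvalues hH i1 * ‖w‖ ^ 2 ≤ (d i1 + ε) * ‖w‖ ^ 2 := by
      rw [hexp]; linarith [h5.1, h5.2]
    exact le_of_mul_le_mul_right h8 hwpos
  have hne01 : i0 ≠ i1 := by
    rw [hi0, hi1]
    simp [Fin.ext_iff]
  have hb1 : sortedEigenvalues hH i1 ≤ d i1 + ε := by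
    by_cases hg0 : g i0 = 0 ∧ g i1 = 0
    · refine key (EuclideanSpace.single i0 (1 : ℂ)) ?_ ?_ ?_
      · intro hc
        have := congrFun (congrArg (fun v : EuclideanSpace ℂ (Fin N) => (v : Fin N → ℂ)) hc) i0
        simp [EuclideanSpace.single_apply] at this
      · intro j hj0 hj1
        simp [EuclideanSpace.single_apply, hj0]
      · rw [EuclideanSpace.inner_single_right]
        simp [hg0.1]
    · refine key (EuclideanSpace.single i0 ((starRingEnd ℂ) (g i1))
          - EuclideanSpace.single i1 ((starRingEnd ℂ) (g i0))) ?_ ?_ ?_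
      · intro hc
        by_cases hg1 : g i1 = 0
        · have hg0' : g i0 ≠ 0 := fun h0 => hg0 ⟨h0, hg1⟩
          have := congrFun (congrArg (fun v : EuclideanSpace ℂ (Fin N) => (v : Fin N → ℂ)) hc) i1
          simp [EuclideanSpace.single_apply, hne01, Ne.symm hne01] at this
          exact hg0' this
        · have := congrFun (congrArg (fun v : EuclideanSpace ℂ (Fin N) => (v : Fin N → ℂ)) hc) i0
          simp [EuclideanSpace.single_apply, hne01, Ne.symm hne01] at this
          exact hg1 this
      · intro j hj0 hj1
        have e1 : (EuclideanSpace.single i0 ((starRingEnd ℂ) (g i1))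
            - EuclideanSpace.single i1 ((starRingEnd ℂ) (g i0))) j
            = EuclideanSpace.single i0 ((starRingEnd ℂ) (g i1)) j
              - EuclideanSpace.single i1 ((starRingEnd ℂ) (g i0)) j := rfl
        rw [e1]
        simp [EuclideanSpace.single_apply, hj0, hj1]
      · rw [inner_sub_right, EuclideanSpace.inner_single_right,
          EuclideanSpace.inner_single_right]
        ring
  have hgap' : sortedEigenvalues hH i1 - sortedEigenvalues hH i0 ≥ δ := hgap
  have hfin : d i1 - d i0 ≥ δ - 2 * ε := by linarith
  exact hfin
end

section
/- Let H_0, V be Hermitian operators on a finite-dimensional Hilbert space decomposed as H_− ⊕ H_+ with projections P_±. Suppose H_0 is block-diagonal, P_−H_0P_− = ζ·P_− for some real ζ, and all eigenvalues of P_+H_0P_+ are at least ζ + Δ. Let H_target be a Hermitian operator on H_− with ‖H_target − P_−H_0P_− − P_−VP_−‖ ≤ ε/2 (as operators on H_−). If Δ ≥ C·(ε⁻¹‖V‖² + ε_enc⁻¹‖V‖) for a sufficiently large universal constant C, then H_sim := H_0 + V has its dim(H_−) smallest eigenvalues each within ε of the corresponding eigenvalues of H_target (in sorted order). -/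
open Matrix

open scoped InnerProductSpace ComplexConjugate

namespace FOR

variable {n : ℕ}

abbrev E (n : ℕ) := EuclideanSpace ℂ (Fin n)

lemma quad_repr (u : OrthonormalBasis (Fin n) ℂ (E n)) (lam : Fin n → ℝ)
    (L : E n →ₗ[ℂ] E n) (hLu : ∀ i, L (u i) = (lam i : ℂ) • u i) (x : E n) :
    (⟪x, L x⟫_ℂ).re = ∑ i, lam i * ‖⟪u i, x⟫_ℂ‖ ^ 2 := by
  have hinner : ∀ i, ⟪u i, L x⟫_ℂ = (lam i : ℂ) * ⟪u i, x⟫_ℂ := by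
    intro i
    conv_lhs => rw [← u.sum_repr x]
    rw [map_sum, inner_sum]
    have : ∀ j, ⟪u i, L ((u.repr x j) • u j)⟫_ℂ =
        (if j = i then (lam i : ℂ) * (u.repr x i) else 0) := by
      intro j
      rw [LinearMap.map_smul, hLu j, inner_smul_right, inner_smul_right]
      rcases eq_or_ne j i with rfl | hji
      · simp [inner_self_eq_norm_sq_to_K, u.orthonormal.1 j]
        ring
      · simp [u.orthonormal.2 (Ne.symm hji), hji]
    simp only [this, Finset.sum_ite_eq', Finset.mem_univ, if_true]
    rw [u.repr_apply_apply]
  have key : ⟪x, L x⟫_ℂ = ∑ i, conj (⟪u i, x⟫_ℂ) * ((lam i : ℂ) * ⟪u i, x⟫_ℂ) := by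
    rw [← u.repr.inner_map_map x (L x), PiLp.inner_apply]
    congr 1
    ext i
    rw [u.repr_apply_apply, u.repr_apply_apply, hinner i]
    simp [RCLike.inner_apply]
    ring
  rw [key]
  rw [Complex.re_sum]
  congr 1
  ext i
  set z := ⟪u i, x⟫_ℂ
  have hz : z * conj z = ((‖z‖^2 : ℝ) : ℂ) := by
    rw [Complex.mul_conj]
    norm_cast
    rw [Complex.normSq_eq_norm_sq]
  have : conj z * ((lam i : ℂ) * z) = ((lam i * ‖z‖^2 : ℝ) : ℂ) := by
    rw [show conj z * ((lam i : ℂ) * z) = (lam i : ℂ) * (z * conj z) by ring, hz]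
    push_cast
    ring
  rw [this, Complex.ofReal_re]


lemma norm_repr (u : OrthonormalBasis (Fin n) ℂ (E n)) (x : E n) :
    ‖x‖ ^ 2 = ∑ i, ‖⟪u i, x⟫_ℂ‖ ^ 2 := by
  have h := quad_repr u (fun _ => 1) LinearMap.id (fun i => by simp) x
  simp only [one_mul, LinearMap.id_apply] at h
  rw [← inner_self_eq_norm_sq (𝕜 := ℂ) x]
  exact h

lemma quad_ge (u : OrthonormalBasis (Fin n) ℂ (E n)) (lam : Fin n → ℝ)
    (L : E n →ₗ[ℂ] E n) (hLu : ∀ i, L (u i) = (lam i : ℂ) • u i) (x : E n) (m : ℝ)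
    (h : ∀ i, ⟪u i, x⟫_ℂ ≠ 0 → m ≤ lam i) :
    m * ‖x‖ ^ 2 ≤ (⟪x, L x⟫_ℂ).re := by
  rw [quad_repr u lam L hLu x, norm_repr u x, Finset.mul_sum]
  apply Finset.sum_le_sum
  intro i _
  rcases eq_or_ne (⟪u i, x⟫_ℂ) 0 with hz | hz
  · simp [hz]
  · exact mul_le_mul_of_nonneg_right (h i hz) (by positivity)

lemma quad_le (u : OrthonormalBasis (Fin n) ℂ (E n)) (lam : Fin n → ℝ)
    (L : E n →ₗ[ℂ] E n) (hLu : ∀ i, L (u i) = (lam i : ℂ) • u i) (x : E n) (m : ℝ)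
    (h : ∀ i, ⟪u i, x⟫_ℂ ≠ 0 → lam i ≤ m) :
    (⟪x, L x⟫_ℂ).re ≤ m * ‖x‖ ^ 2 := by
  rw [quad_repr u lam L hLu x, norm_repr u x, Finset.mul_sum]
  apply Finset.sum_le_sum
  intro i _
  rcases eq_or_ne (⟪u i, x⟫_ℂ) 0 with hz | hz
  · simp [hz]
  · exact mul_le_mul_of_nonneg_right (h i hz) (by positivity)

/-- The sorted eigenvector basis. -/
noncomputable def sBasis {M : Matrix (Fin n) (Fin n) ℂ} (hM : M.IsHermitian) :
    OrthonormalBasis (Fin n) ℂ (E n) :=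
  hM.eigenvectorBasis.reindex (Tuple.sort hM.eigenvalues).symm

lemma sBasis_apply {M : Matrix (Fin n) (Fin n) ℂ} (hM : M.IsHermitian) (i : Fin n) :
    sBasis hM i = hM.eigenvectorBasis (Tuple.sort hM.eigenvalues i) := by
  simp [sBasis]

lemma sBasis_eigen {M : Matrix (Fin n) (Fin n) ℂ} (hM : M.IsHermitian) (i : Fin n) :
    Matrix.toEuclideanLin M (sBasis hM i) =
      ((sortedEigenvalues hM i : ℝ) : ℂ) • sBasis hM i := by
  rw [sBasis_apply]
  have := hM.mulVec_eigenvectorBasis (Tuple.sort hM.eigenvalues i)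
  ext k
  have hk := congrFun this k
  simp only [Pi.smul_apply] at hk
  simp only [Matrix.toEuclideanLin_apply, sortedEigenvalues, Function.comp]
  simpa using hk

lemma sorted_monotone {M : Matrix (Fin n) (Fin n) ℂ} (hM : M.IsHermitian) :
    Monotone (sortedEigenvalues hM) :=
  Tuple.monotone_sort hM.eigenvalues

lemma exists_ne_zero_inf (S W : Submodule ℂ (E n))
    (h : n < Module.finrank ℂ S + Module.finrank ℂ W) :
    ∃ x, x ≠ 0 ∧ x ∈ S ∧ x ∈ W := by
  have hsup : Module.finrank ℂ ↥(S ⊔ W) ≤ n := by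
    have := Submodule.finrank_le (S ⊔ W)
    simpa [finrank_euclideanSpace] using this
  have heq := Submodule.finrank_sup_add_finrank_inf_eq S W
  have hpos : 0 < Module.finrank ℂ ↥(S ⊓ W) := by omega
  have hbot : S ⊓ W ≠ ⊥ := by
    intro hb
    rw [hb] at hpos
    simp at hpos
  obtain ⟨x, hx, hx0⟩ := (Submodule.ne_bot_iff _).1 hbot
  exact ⟨x, hx0, hx.1, hx.2⟩


lemma span_le_ker_inner (u : OrthonormalBasis (Fin n) ℂ (E n)) {ι : Type} (f : ι → Fin n)
    (i : Fin n) (hi : ∀ k, f k ≠ i) {x : E n}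
    (hx : x ∈ Submodule.span ℂ (Set.range fun k => u (f k))) : ⟪u i, x⟫_ℂ = 0 := by
  have hle : Submodule.span ℂ (Set.range fun k => u (f k)) ≤
      LinearMap.ker ((innerSL ℂ (u i)).toLinearMap) := by
    rw [Submodule.span_le]
    rintro y ⟨k, rfl⟩
    simp only [SetLike.mem_coe, LinearMap.mem_ker, ContinuousLinearMap.coe_coe, innerSL_apply_apply]
    exact u.orthonormal.2 (Ne.symm (hi k))
  have := hle hx
  simpa using this

lemma cf_lower {M : Matrix (Fin n) (Fin n) ℂ} (hM : M.IsHermitian) (j : Fin n)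
    (W : Submodule ℂ (E n)) (hdim : n ≤ Module.finrank ℂ W + (j : ℕ)) (c : ℝ)
    (hc : ∀ x ∈ W, c * ‖x‖ ^ 2 ≤ (⟪x, Matrix.toEuclideanLin M x⟫_ℂ).re) :
    c ≤ sortedEigenvalues hM j := by
  set u := sBasis hM with hu
  have hjn : (j : ℕ) + 1 ≤ n := j.isLt
  set w : Fin ((j : ℕ) + 1) → E n := fun k => u (Fin.castLE hjn k) with hw
  have hwon : Orthonormal ℂ w := u.orthonormal.comp _ (Fin.castLE_injective hjn)
  set S := Submodule.span ℂ (Set.range w) with hS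
  have hrankS : Module.finrank ℂ S = (j : ℕ) + 1 := by
    rw [hS, finrank_span_eq_card hwon.linearIndependent]
    simp
  obtain ⟨x, hx0, hxS, hxW⟩ := exists_ne_zero_inf S W (by omega)
  have hvanish : ∀ i : Fin n, (j : Fin n) < i → ⟪u i, x⟫_ℂ = 0 := by
    intro i hji
    refine span_le_ker_inner u (fun k => Fin.castLE hjn k) i ?_ hxS
    intro k hk
    have h1 : ((Fin.castLE hjn k : Fin n) : ℕ) = (k : ℕ) := rfl
    have h2 := k.isLt
    have h3 : ((Fin.castLE hjn k : Fin n) : ℕ) = (i : ℕ) := congrArg Fin.val hk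
    have h4 : (j : ℕ) < (i : ℕ) := hji
    omega
  have hquad := quad_le u (sortedEigenvalues hM) (Matrix.toEuclideanLin M)
    (sBasis_eigen hM) x (sortedEigenvalues hM j) ?_
  · have h1 := hc x hxW
    have hx2 : 0 < ‖x‖ ^ 2 := by
      have hxn : 0 < ‖x‖ := norm_pos_iff.mpr hx0
      positivity
    exact (mul_le_mul_iff_of_pos_right hx2).mp (h1.trans hquad)
  · intro i hne
    by_cases h' : j < i
    · exact absurd (hvanish i h') hne
    · exact sorted_monotone hM (le_of_not_gt h')


lemma cf_upper {M : Matrix (Fin n) (Fin n) ℂ} (hM : M.IsHermitian) (j : Fin n)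
    (S : Submodule ℂ (E n)) (hdim : (j : ℕ) + 1 ≤ Module.finrank ℂ S) (c : ℝ)
    (hc : ∀ x ∈ S, (⟪x, Matrix.toEuclideanLin M x⟫_ℂ).re ≤ c * ‖x‖ ^ 2) :
    sortedEigenvalues hM j ≤ c := by
  set u := sBasis hM with hu
  set Φ : E n →ₗ[ℂ] (Fin (j : ℕ) → ℂ) := LinearMap.pi
    (fun i => ((innerSL ℂ (u (Fin.castLE j.isLt.le i))).toLinearMap)) with hΦ
  have hrk := LinearMap.finrank_range_add_finrank_ker Φ
  have htot : Module.finrank ℂ (E n) = n := by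
    simp [finrank_euclideanSpace]
  have hrle : Module.finrank ℂ (LinearMap.range Φ) ≤ (j : ℕ) := by
    have := Submodule.finrank_le (LinearMap.range Φ)
    rwa [Module.finrank_fin_fun] at this
  obtain ⟨x, hx0, hxS, hxK⟩ := exists_ne_zero_inf S (LinearMap.ker Φ) (by omega)
  have hvanish : ∀ i : Fin n, i < j → ⟪u i, x⟫_ℂ = 0 := by
    intro i hij
    have hx' : Φ x = 0 := LinearMap.mem_ker.mp hxK
    have := congrFun hx' ⟨(i : ℕ), hij⟩
    simpa [hΦ] using this
  have hquad := quad_ge u (sortedEigenvalues hM) (Matrix.toEuclideanLin M)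
    (sBasis_eigen hM) x (sortedEigenvalues hM j) ?_
  · have h1 := hc x hxS
    have hx2 : 0 < ‖x‖ ^ 2 := by
      have hxn : 0 < ‖x‖ := norm_pos_iff.mpr hx0
      positivity
    exact (mul_le_mul_iff_of_pos_right hx2).mp (hquad.trans h1)
  · intro i hne
    by_cases h' : i < j
    · exact absurd (hvanish i h') hne
    · exact sorted_monotone hM (le_of_not_gt h')


lemma norm_toEuclideanLin_le {m : ℕ} (M : Matrix (Fin m) (Fin n) ℂ) (y : E n) :
    ‖Matrix.toEuclideanLin M y‖ ≤ opNormRect M * ‖y‖ := by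
  have : Matrix.toEuclideanLin M y =
      (LinearMap.toContinuousLinearMap (Matrix.toEuclideanLin M)) y := rfl
  rw [this]
  exact (LinearMap.toContinuousLinearMap (Matrix.toEuclideanLin M)).le_opNorm y

lemma abs_re_inner_le {m : ℕ} (M : Matrix (Fin m) (Fin n) ℂ) (x : E m) (y : E n) :
    |(⟪x, Matrix.toEuclideanLin M y⟫_ℂ).re| ≤ opNormRect M * ‖x‖ * ‖y‖ := by
  have h1 : |(⟪x, Matrix.toEuclideanLin M y⟫_ℂ).re| ≤ ‖⟪x, Matrix.toEuclideanLin M y⟫_ℂ‖ :=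
    Complex.abs_re_le_norm _
  have h2 := norm_inner_le_norm (𝕜 := ℂ) x (Matrix.toEuclideanLin M y)
  have h3 := norm_toEuclideanLin_le M y
  have h4 : ‖x‖ * ‖Matrix.toEuclideanLin M y‖ ≤ ‖x‖ * (opNormRect M * ‖y‖) :=
    mul_le_mul_of_nonneg_left h3 (norm_nonneg x)
  calc |(⟪x, Matrix.toEuclideanLin M y⟫_ℂ).re| ≤ _ := h1
    _ ≤ _ := h2
    _ ≤ ‖x‖ * (opNormRect M * ‖y‖) := h4
    _ = opNormRect M * ‖x‖ * ‖y‖ := by ring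

lemma opNormRect_nonneg {m : ℕ} (M : Matrix (Fin m) (Fin n) ℂ) : 0 ≤ opNormRect M :=
  norm_nonneg _

lemma opNormRect_neg {m : ℕ} (M : Matrix (Fin m) (Fin n) ℂ) :
    opNormRect (-M) = opNormRect M := by
  unfold opNormRect
  rw [show Matrix.toEuclideanLin (-M) = -(Matrix.toEuclideanLin M) from map_neg _ M,
    show LinearMap.toContinuousLinearMap (-(Matrix.toEuclideanLin M)) =
      -(LinearMap.toContinuousLinearMap (Matrix.toEuclideanLin M)) from map_neg _ _,
    norm_neg]

lemma weyl_le {X Y : Matrix (Fin n) (Fin n) ℂ} (hX : X.IsHermitian) (hY : Y.IsHermitian)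
    (j : Fin n) :
    sortedEigenvalues hX j ≤ sortedEigenvalues hY j + opNormRect (X - Y) := by
  set u := sBasis hY with hu
  have hjn : (j : ℕ) + 1 ≤ n := j.isLt
  set w : Fin ((j : ℕ) + 1) → E n := fun k => u (Fin.castLE hjn k) with hw
  have hwon : Orthonormal ℂ w := u.orthonormal.comp _ (Fin.castLE_injective hjn)
  apply cf_upper hX j (Submodule.span ℂ (Set.range w))
  · rw [finrank_span_eq_card hwon.linearIndependent]
    simp
  · intro x hx
    have hvanish : ∀ i : Fin n, (j : Fin n) < i → ⟪u i, x⟫_ℂ = 0 := by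
      intro i hji
      refine span_le_ker_inner u (fun k => Fin.castLE hjn k) i ?_ hx
      intro k hk
      have h1 : ((Fin.castLE hjn k : Fin n) : ℕ) = (k : ℕ) := rfl
      have h2 := k.isLt
      have h3 : ((Fin.castLE hjn k : Fin n) : ℕ) = (i : ℕ) := congrArg Fin.val hk
      have h4 : (j : ℕ) < (i : ℕ) := hji
      omega
    have hquadY := quad_le u (sortedEigenvalues hY) (Matrix.toEuclideanLin Y)
      (sBasis_eigen hY) x (sortedEigenvalues hY j) ?_
    · have hsplit : Matrix.toEuclideanLin X x =
          Matrix.toEuclideanLin Y x + Matrix.toEuclideanLin (X - Y) x := by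
        rw [show Matrix.toEuclideanLin (X - Y) = Matrix.toEuclideanLin X -
          Matrix.toEuclideanLin Y from map_sub _ X Y]
        simp
      rw [hsplit, inner_add_right]
      have hbd := abs_re_inner_le (X - Y) x x
      have := abs_le.mp hbd
      have hre : (⟪x, Matrix.toEuclideanLin Y x⟫_ℂ + ⟪x, Matrix.toEuclideanLin (X - Y) x⟫_ℂ).re =
          (⟪x, Matrix.toEuclideanLin Y x⟫_ℂ).re + (⟪x, Matrix.toEuclideanLin (X - Y) x⟫_ℂ).re :=
        Complex.add_re _ _
      rw [hre]
      nlinarith [this.2, hquadY]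
    · intro i hne
      by_cases h' : j < i
      · exact absurd (hvanish i h') hne
      · exact sorted_monotone hY (le_of_not_gt h')

lemma weyl_abs {X Y : Matrix (Fin n) (Fin n) ℂ} (hX : X.IsHermitian) (hY : Y.IsHermitian)
    (j : Fin n) :
    |sortedEigenvalues hX j - sortedEigenvalues hY j| ≤ opNormRect (X - Y) := by
  have h1 := weyl_le hX hY j
  have h2 := weyl_le hY hX j
  rw [show Y - X = -(X - Y) by rw [neg_sub], opNormRect_neg] at h2
  rw [abs_le]
  constructor <;> linarith


lemma basis_eigen {M : Matrix (Fin n) (Fin n) ℂ} (hM : M.IsHermitian) (i : Fin n) :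
    Matrix.toEuclideanLin M (hM.eigenvectorBasis i) =
      ((hM.eigenvalues i : ℝ) : ℂ) • hM.eigenvectorBasis i := by
  have := hM.mulVec_eigenvectorBasis i
  ext k
  have hk := congrFun this k
  simp only [Pi.smul_apply] at hk
  simp only [Matrix.toEuclideanLin_apply]
  simpa using hk

lemma eigen_lower {M : Matrix (Fin n) (Fin n) ℂ} (hM : M.IsHermitian) (m : ℝ)
    (h : ∀ i, m ≤ hM.eigenvalues i) (x : E n) :
    m * ‖x‖ ^ 2 ≤ (⟪x, Matrix.toEuclideanLin M x⟫_ℂ).re :=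
  quad_ge hM.eigenvectorBasis hM.eigenvalues (Matrix.toEuclideanLin M)
    (basis_eigen hM) x m (fun i _ => h i)

section Blocks

variable {a b : ℕ}

def Pm (x : E (a + b)) : E a := WithLp.toLp 2 fun i => x (Fin.castAdd b i)
def Pp (x : E (a + b)) : E b := WithLp.toLp 2 fun k => x (Fin.natAdd a k)
def Jm (y : E a) : E (a + b) := WithLp.toLp 2 fun k => Fin.addCases (motive := fun _ => ℂ) (fun i => y i) (fun _ => 0) k
def Jp (z : E b) : E (a + b) := WithLp.toLp 2 fun k => Fin.addCases (motive := fun _ => ℂ) (fun _ => 0) (fun i => z i) k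

@[simp] lemma Jm_castAdd (y : E a) (i : Fin a) : Jm (b := b) y (Fin.castAdd b i) = y i := by
  simp [Jm]
@[simp] lemma Jm_natAdd (y : E a) (k : Fin b) : Jm y (Fin.natAdd a k) = 0 := by
  simp [Jm]
@[simp] lemma Jp_castAdd (z : E b) (i : Fin a) : Jp (a := a) z (Fin.castAdd b i) = 0 := by
  simp [Jp]
@[simp] lemma Jp_natAdd (z : E b) (k : Fin b) : Jp (a := a) z (Fin.natAdd a k) = z k := by
  simp [Jp]

@[simp] lemma Pm_Jm (y : E a) : Pm (Jm (b := b) y) = y := PiLp.ext fun i => Jm_castAdd y i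
@[simp] lemma Pp_Jm (y : E a) : Pp (Jm (b := b) y) = 0 := PiLp.ext fun k => Jm_natAdd y k
@[simp] lemma Pm_Jp (z : E b) : Pm (Jp (a := a) z) = 0 := PiLp.ext fun i => Jp_castAdd z i
@[simp] lemma Pp_Jp (z : E b) : Pp (Jp (a := a) z) = z := PiLp.ext fun k => Jp_natAdd z k

lemma decompose (x : E (a + b)) : x = Jm (Pm x) + Jp (Pp x) := by
  ext k
  induction k using Fin.addCases with
  | left i => simp [Pm]
  | right k => simp [Pp]

lemma inner_split (x y : E (a + b)) :
    ⟪x, y⟫_ℂ = ⟪Pm x, Pm y⟫_ℂ + ⟪Pp x, Pp y⟫_ℂ := by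
  simp only [PiLp.inner_apply, RCLike.inner_apply]
  rw [Fin.sum_univ_add]; rfl

lemma inner_Jm_left (y : E a) (x : E (a + b)) : ⟪Jm y, x⟫_ℂ = ⟪y, Pm x⟫_ℂ := by
  rw [inner_split (Jm y) x, Pm_Jm, Pp_Jm]
  simp

lemma inner_Jp_left (z : E b) (x : E (a + b)) : ⟪Jp z, x⟫_ℂ = ⟪z, Pp x⟫_ℂ := by
  rw [inner_split (Jp z) x, Pm_Jp, Pp_Jp]
  simp

lemma norm_sq_split (x : E (a + b)) : ‖x‖ ^ 2 = ‖Pm x‖ ^ 2 + ‖Pp x‖ ^ 2 := by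
  rw [← inner_self_eq_norm_sq (𝕜 := ℂ) x, ← inner_self_eq_norm_sq (𝕜 := ℂ) (Pm x),
    ← inner_self_eq_norm_sq (𝕜 := ℂ) (Pp x), inner_split x x]
  rfl

lemma norm_Jm (y : E a) : ‖Jm (b := b) y‖ = ‖y‖ := by
  have h : ‖Jm (b := b) y‖ ^ 2 = ‖y‖ ^ 2 := by
    rw [norm_sq_split (Jm y), Pm_Jm, Pp_Jm]
    simp
  nlinarith [norm_nonneg (Jm (b := b) y), norm_nonneg y]


lemma norm_Jp (z : E b) : ‖Jp (a := a) z‖ = ‖z‖ := by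
  have h : ‖Jp (a := a) z‖ ^ 2 = ‖z‖ ^ 2 := by
    rw [norm_sq_split (Jp z), Pm_Jp, Pp_Jp]
    simp
  nlinarith [norm_nonneg (Jp (a := a) z), norm_nonneg z]

def Bmm (M : Matrix (Fin (a + b)) (Fin (a + b)) ℂ) : Matrix (Fin a) (Fin a) ℂ :=
  Matrix.of fun i j => M (Fin.castAdd b i) (Fin.castAdd b j)
def Bmp (M : Matrix (Fin (a + b)) (Fin (a + b)) ℂ) : Matrix (Fin a) (Fin b) ℂ :=
  Matrix.of fun i j => M (Fin.castAdd b i) (Fin.natAdd a j)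
def Bpm (M : Matrix (Fin (a + b)) (Fin (a + b)) ℂ) : Matrix (Fin b) (Fin a) ℂ :=
  Matrix.of fun i j => M (Fin.natAdd a i) (Fin.castAdd b j)
def Bpp (M : Matrix (Fin (a + b)) (Fin (a + b)) ℂ) : Matrix (Fin b) (Fin b) ℂ :=
  Matrix.of fun i j => M (Fin.natAdd a i) (Fin.natAdd a j)

lemma teu_apply {m n : ℕ} (M : Matrix (Fin m) (Fin n) ℂ) (x : E n) (i : Fin m) :
    Matrix.toEuclideanLin M x i = ∑ j, M i j * x j := rfl

lemma Pm_teu (M : Matrix (Fin (a + b)) (Fin (a + b)) ℂ) (x : E (a + b)) :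
    Pm (Matrix.toEuclideanLin M x) =
      Matrix.toEuclideanLin (Bmm M) (Pm x) + Matrix.toEuclideanLin (Bmp M) (Pp x) := by
  ext i
  have : (Matrix.toEuclideanLin (Bmm M) (Pm x) + Matrix.toEuclideanLin (Bmp M) (Pp x)) i =
      Matrix.toEuclideanLin (Bmm M) (Pm x) i + Matrix.toEuclideanLin (Bmp M) (Pp x) i := rfl
  rw [this, teu_apply, teu_apply]
  show Matrix.toEuclideanLin M x (Fin.castAdd b i) = _
  rw [teu_apply]
  rw [Fin.sum_univ_add]
  rfl

lemma Pp_teu (M : Matrix (Fin (a + b)) (Fin (a + b)) ℂ) (x : E (a + b)) :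
    Pp (Matrix.toEuclideanLin M x) =
      Matrix.toEuclideanLin (Bpm M) (Pm x) + Matrix.toEuclideanLin (Bpp M) (Pp x) := by
  ext k
  have : (Matrix.toEuclideanLin (Bpm M) (Pm x) + Matrix.toEuclideanLin (Bpp M) (Pp x)) k =
      Matrix.toEuclideanLin (Bpm M) (Pm x) k + Matrix.toEuclideanLin (Bpp M) (Pp x) k := rfl
  rw [this, teu_apply, teu_apply]
  show Matrix.toEuclideanLin M x (Fin.natAdd a k) = _
  rw [teu_apply]
  rw [Fin.sum_univ_add]
  rfl

lemma inner_Jm_teu_Jm (M : Matrix (Fin (a + b)) (Fin (a + b)) ℂ) (y z : E a) :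
    ⟪Jm y, Matrix.toEuclideanLin M (Jm z)⟫_ℂ = ⟪y, Matrix.toEuclideanLin (Bmm M) z⟫_ℂ := by
  rw [inner_Jm_left, Pm_teu, Pm_Jm, Pp_Jm]
  simp

lemma inner_Jm_teu_Jp (M : Matrix (Fin (a + b)) (Fin (a + b)) ℂ) (y : E a) (z : E b) :
    ⟪Jm y, Matrix.toEuclideanLin M (Jp z)⟫_ℂ = ⟪y, Matrix.toEuclideanLin (Bmp M) z⟫_ℂ := by
  rw [inner_Jm_left, Pm_teu, Pm_Jp, Pp_Jp]
  simp

lemma inner_Jp_teu_Jm (M : Matrix (Fin (a + b)) (Fin (a + b)) ℂ) (y : E b) (z : E a) :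
    ⟪Jp y, Matrix.toEuclideanLin M (Jm z)⟫_ℂ = ⟪y, Matrix.toEuclideanLin (Bpm M) z⟫_ℂ := by
  rw [inner_Jp_left, Pp_teu, Pm_Jm, Pp_Jm]
  simp

lemma inner_Jp_teu_Jp (M : Matrix (Fin (a + b)) (Fin (a + b)) ℂ) (y z : E b) :
    ⟪Jp y, Matrix.toEuclideanLin M (Jp z)⟫_ℂ = ⟪y, Matrix.toEuclideanLin (Bpp M) z⟫_ℂ := by
  rw [inner_Jp_left, Pp_teu, Pm_Jp, Pp_Jp]
  simp


lemma teu_smul_one {m : ℕ} (z : ℝ) (y : E m) :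
    Matrix.toEuclideanLin ((z : ℂ) • (1 : Matrix (Fin m) (Fin m) ℂ)) y = (z : ℂ) • y := by
  ext i
  rw [teu_apply]
  have : ((z : ℂ) • y) i = (z : ℂ) * y i := rfl
  rw [this]
  rw [Finset.sum_congr rfl (fun j _ => by
    rw [Matrix.smul_apply, Matrix.one_apply, smul_eq_mul, mul_ite, mul_one, mul_zero, ite_mul,
      zero_mul])]
  simp

lemma quad_smul_one {m : ℕ} (z : ℝ) (y : E m) :
    (⟪y, Matrix.toEuclideanLin ((z : ℂ) • (1 : Matrix (Fin m) (Fin m) ℂ)) y⟫_ℂ).re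
      = z * ‖y‖ ^ 2 := by
  rw [teu_smul_one, inner_smul_right, inner_self_eq_norm_sq_to_K]
  simp [Complex.mul_re, ← Complex.ofReal_pow]

lemma quad_expand (M : Matrix (Fin (a + b)) (Fin (a + b)) ℂ) (x : E (a + b)) :
    (⟪x, Matrix.toEuclideanLin M x⟫_ℂ).re =
      (⟪Jm (Pm x), Matrix.toEuclideanLin M (Jm (Pm x))⟫_ℂ).re +
      (⟪Jm (Pm x), Matrix.toEuclideanLin M (Jp (Pp x))⟫_ℂ).re +
      (⟪Jp (Pp x), Matrix.toEuclideanLin M (Jm (Pm x))⟫_ℂ).re +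
      (⟪Jp (Pp x), Matrix.toEuclideanLin M (Jp (Pp x))⟫_ℂ).re := by
  conv_lhs => rw [decompose x]
  rw [map_add, inner_add_left, inner_add_right, inner_add_right, Complex.add_re,
    Complex.add_re, Complex.add_re]
  ring


lemma inner_Jm_Jm (y z : E a) : ⟪Jm (b := b) y, Jm z⟫_ℂ = ⟪y, z⟫_ℂ := by
  rw [inner_Jm_left, Pm_Jm]

@[simp] lemma Jp_zero : Jp (a := a) (0 : E b) = 0 := by
  ext k
  induction k using Fin.addCases with
  | left i => simp
  | right k => simp
  
def Ppl : E (a + b) →ₗ[ℂ] E b where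
  toFun := Pp
  map_add' := fun x y => rfl
  map_smul' := fun c x => PiLp.ext fun k => rfl

end Blocks

end FOR



set_option maxHeartbeats 2000000 in
open FOR in
/-- first-order perturbative reduction, eigenvalue form: on `ℂ^{a+b}` with
`H₋` the first `a` coordinates, suppose `H₀` is block-diagonal with `P₋H₀P₋ = ζ·P₋` and all
eigenvalues of `P₊H₀P₊` at least `ζ + Δ`, and `‖H_target − P₋H₀P₋ − P₋VP₋‖ ≤ ε/2`.  If
`Δ ≥ C(ε⁻¹‖V‖² + ε_enc⁻¹‖V‖)` for a sufficiently large universal constant `C`, then the `a`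
smallest eigenvalues of `H₀ + V` are each within `ε` of the corresponding eigenvalues of
`H_target` in sorted order. -/
theorem first_order_reduction :
    ∃ C : ℝ, 0 < C ∧
      ∀ (a b : ℕ) (H0 V : Matrix (Fin (a + b)) (Fin (a + b)) ℂ)
        (hH0 : H0.IsHermitian) (hV : V.IsHermitian)
        (ζ Δ ε εenc : ℝ) (hε : 0 < ε) (henc : 0 < εenc)
        (hblock : ∀ (i : Fin a) (j : Fin b), H0 (Fin.castAdd b i) (Fin.natAdd a j) = 0)
        (hmm : ∀ i j : Fin a, H0 (Fin.castAdd b i) (Fin.castAdd b j) =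
          if i = j then (ζ : ℂ) else 0)
        (hpp : ∀ hp : (Matrix.of fun i j : Fin b =>
            H0 (Fin.natAdd a i) (Fin.natAdd a j)).IsHermitian,
          ∀ i : Fin b, hp.eigenvalues i ≥ ζ + Δ)
        (Ht : Matrix (Fin a) (Fin a) ℂ) (hHt : Ht.IsHermitian)
        (happrox : opNormRect (Ht - (ζ : ℂ) • (1 : Matrix (Fin a) (Fin a) ℂ) -
          Matrix.of fun i j : Fin a => V (Fin.castAdd b i) (Fin.castAdd b j)) ≤ ε / 2)
        (hΔ : Δ ≥ C * (ε⁻¹ * opNormRect V ^ 2 + εenc⁻¹ * opNormRect V))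
        (hSim : (H0 + V).IsHermitian),
        ∀ j : Fin a,
          |sortedEigenvalues hSim (Fin.castLE (Nat.le_add_right a b) j) -
            sortedEigenvalues hHt j| ≤ ε := by
  refine ⟨10, by norm_num, ?_⟩
  intro a b H0 V hH0 hV ζ Δ ε εenc hε henc hblock hmm hpp Ht hHt happrox hΔ hSim j
  set v := opNormRect V with hvdef
  have hv : 0 ≤ v := opNormRect_nonneg V
  -- the effective target matrix A on the small space
  set A : Matrix (Fin a) (Fin a) ℂ := (ζ : ℂ) • 1 + Bmm V with hAdef
  have hVmm : (Bmm (a := a) (b := b) V).IsHermitian := by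
    ext i j
    rw [Matrix.conjTranspose_apply]
    show star (V (Fin.castAdd b j) (Fin.castAdd b i)) = V (Fin.castAdd b i) (Fin.castAdd b j)
    exact hV.apply _ _
  have hA : A.IsHermitian := by
    apply Matrix.IsHermitian.add ?_ hVmm
    rw [Matrix.IsHermitian, Matrix.conjTranspose_smul, Matrix.conjTranspose_one]
    norm_num
  have hjn : (j : ℕ) + 1 ≤ a := j.isLt
  set uA := sBasis hA with huA
  set lamA := sortedEigenvalues hA with hlamA
  -- block facts on H0
  have hBmmH0 : Bmm H0 = (ζ : ℂ) • (1 : Matrix (Fin a) (Fin a) ℂ) := by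
    ext i j
    show H0 (Fin.castAdd b i) (Fin.castAdd b j) = ((ζ : ℂ) • (1 : Matrix (Fin a) (Fin a) ℂ)) i j
    rw [hmm i j, Matrix.smul_apply, Matrix.one_apply]
    split <;> simp
  have hBmpH0 : Bmp H0 = 0 := by
    ext i j
    exact hblock i j
  have hBpmH0 : Bpm H0 = 0 := by
    ext i j
    show H0 (Fin.natAdd a i) (Fin.castAdd b j) = 0
    rw [← hH0.apply (Fin.natAdd a i) (Fin.castAdd b j), hblock j i, star_zero]
  have hD0 : (Bpp (a := a) H0).IsHermitian := by
    ext i j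
    rw [Matrix.conjTranspose_apply]
    exact hH0.apply _ _
  have hD0low := hpp hD0
  -- Bmm of the sum
  have hBmmSum : Bmm (H0 + V) = A := by
    ext i j
    show H0 (Fin.castAdd b i) (Fin.castAdd b j) + V (Fin.castAdd b i) (Fin.castAdd b j) = A i j
    rw [hAdef, Matrix.add_apply]
    congr 1
    rw [hmm i j, Matrix.smul_apply, Matrix.one_apply]
    split <;> simp
  -- quadratic form of A
  have hquadA : ∀ y : E a, (⟪y, Matrix.toEuclideanLin A y⟫_ℂ).re =
      ζ * ‖y‖ ^ 2 + (⟪y, Matrix.toEuclideanLin (Bmm V) y⟫_ℂ).re := by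
    intro y
    rw [hAdef, map_add, LinearMap.add_apply, inner_add_right, Complex.add_re, quad_smul_one]
  -- upper bound on eigenvalues of A
  have hAub : lamA j ≤ ζ + v := by
    apply cf_upper hA j ⊤
    · rw [finrank_top, finrank_euclideanSpace]
      simpa using hjn
    · intro y _
      rw [hquadA y]
      have h1 : (⟪y, Matrix.toEuclideanLin (Bmm V) y⟫_ℂ).re =
          (⟪Jm y, Matrix.toEuclideanLin V (Jm y)⟫_ℂ).re := by
        rw [inner_Jm_teu_Jm]
      rw [h1]
      have h2 := (abs_le.mp (abs_re_inner_le V (Jm (b := b) y) (Jm y))).2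
      rw [norm_Jm, ← hvdef] at h2
      nlinarith [norm_nonneg y]
  -- Weyl comparison between Ht and A
  have hWeyl : |sortedEigenvalues hHt j - lamA j| ≤ ε / 2 := by
    have h := weyl_abs hHt hA j
    have hmat : Ht - A = Ht - (ζ : ℂ) • (1 : Matrix (Fin a) (Fin a) ℂ) -
        Matrix.of fun i j : Fin a => V (Fin.castAdd b i) (Fin.castAdd b j) := by
      rw [hAdef]
      abel
    rw [hmat] at h
    exact h.trans happrox
  -- upper bound: lamS ≤ lamA j
  have hub : sortedEigenvalues hSim (Fin.castLE (Nat.le_add_right a b) j) ≤ lamA j := by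
    have hwon : Orthonormal ℂ (fun k : Fin ((j : ℕ) + 1) =>
        Jm (b := b) (uA (Fin.castLE hjn k))) := by
      rw [orthonormal_iff_ite]
      intro k k'
      rw [inner_Jm_Jm]
      rw [orthonormal_iff_ite.mp uA.orthonormal (Fin.castLE hjn k) (Fin.castLE hjn k')]
      by_cases h : k = k'
      · subst h; simp
      · rw [if_neg (fun hc => h (Fin.castLE_injective hjn hc)), if_neg h]
    apply cf_upper hSim (Fin.castLE (Nat.le_add_right a b) j)
      (Submodule.span ℂ (Set.range fun k : Fin ((j : ℕ) + 1) =>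
        Jm (b := b) (uA (Fin.castLE hjn k))))
    · rw [finrank_span_eq_card hwon.linearIndependent]
      simp
    · intro x hx
      have hPp : Pp x = 0 := by
        have hle : Submodule.span ℂ (Set.range fun k : Fin ((j : ℕ) + 1) =>
            Jm (b := b) (uA (Fin.castLE hjn k))) ≤ LinearMap.ker (Ppl (a := a) (b := b)) := by
          rw [Submodule.span_le]
          rintro y ⟨k, rfl⟩
          simp only [SetLike.mem_coe, LinearMap.mem_ker]
          show Pp (Jm _) = 0
          exact Pp_Jm _
        exact LinearMap.mem_ker.mp (hle hx)
      have hxeq : x = Jm (Pm x) := by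
        conv_lhs => rw [decompose x]
        rw [hPp, Jp_zero, add_zero]
      have hvan : ∀ i : Fin a, j < i → ⟪uA i, Pm x⟫_ℂ = 0 := by
        intro i hji
        have hle : Submodule.span ℂ (Set.range fun k : Fin ((j : ℕ) + 1) =>
            Jm (b := b) (uA (Fin.castLE hjn k))) ≤
            LinearMap.ker ((innerSL ℂ (Jm (b := b) (uA i))).toLinearMap) := by
          rw [Submodule.span_le]
          rintro y ⟨k, rfl⟩
          simp only [SetLike.mem_coe, LinearMap.mem_ker, ContinuousLinearMap.coe_coe,
            innerSL_apply_apply]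
          rw [inner_Jm_Jm]
          apply uA.orthonormal.2
          intro hc
          have h3 := congrArg Fin.val hc
          have h4 : ((Fin.castLE hjn k : Fin a) : ℕ) = (k : ℕ) := rfl
          have h5 := k.isLt
          have h6 : (j : ℕ) < (i : ℕ) := hji
          omega
        have hz := hle hx
        simp only [SetLike.mem_coe, LinearMap.mem_ker, ContinuousLinearMap.coe_coe,
          innerSL_apply_apply] at hz
        rw [← inner_Jm_left]
        exact hz
      have h1 : (⟪x, Matrix.toEuclideanLin (H0 + V) x⟫_ℂ).re =
          (⟪Pm x, Matrix.toEuclideanLin A (Pm x)⟫_ℂ).re := by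
        conv_lhs => rw [hxeq]
        rw [inner_Jm_teu_Jm, hBmmSum]
      have h2 := quad_le uA lamA (Matrix.toEuclideanLin A) (sBasis_eigen hA) (Pm x)
        (lamA j) ?_
      · rw [h1]
        have hnx : ‖x‖ = ‖Pm x‖ := by
          conv_lhs => rw [hxeq]
          rw [norm_Jm]
        rw [hnx]
        exact h2
      · intro i hne
        by_cases h' : j < i
        · exact absurd (hvan i h') hne
        · exact sorted_monotone hA (le_of_not_gt h')
  -- lower bound
  have hΔε : 10 * v ^ 2 ≤ Δ * ε := by
    have h0 : 10 * (ε⁻¹ * v ^ 2) ≤ Δ := by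
      refine le_trans ?_ hΔ
      have : 0 ≤ εenc⁻¹ * v := mul_nonneg (inv_nonneg.mpr henc.le) hv
      nlinarith
    have h1 := mul_le_mul_of_nonneg_right h0 hε.le
    calc 10 * v ^ 2 = 10 * (ε⁻¹ * v ^ 2) * ε := by field_simp
      _ ≤ Δ * ε := h1
  have hlb : lamA j - ε / 2 ≤ sortedEigenvalues hSim (Fin.castLE (Nat.le_add_right a b) j) := by
    set Φ : E (a + b) →ₗ[ℂ] (Fin (j : ℕ) → ℂ) := LinearMap.pi
      (fun i => ((innerSL ℂ (Jm (b := b) (uA (Fin.castLE j.isLt.le i)))).toLinearMap)) with hΦ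
    apply cf_lower hSim (Fin.castLE (Nat.le_add_right a b) j) (LinearMap.ker Φ)
    · have hrk := LinearMap.finrank_range_add_finrank_ker Φ
      have htot : Module.finrank ℂ (E (a + b)) = a + b := by
        simp [finrank_euclideanSpace]
      have hrle : Module.finrank ℂ (LinearMap.range Φ) ≤ (j : ℕ) := by
        have := Submodule.finrank_le (LinearMap.range Φ)
        rwa [Module.finrank_fin_fun] at this
      have hcast : ((Fin.castLE (Nat.le_add_right a b) j : Fin (a + b)) : ℕ) = (j : ℕ) := rfl
      omega
    · intro x hx
      have hvany : ∀ i : Fin a, i < j → ⟪uA i, Pm x⟫_ℂ = 0 := by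
        intro i hij
        have hx' : Φ x = 0 := LinearMap.mem_ker.mp hx
        have h7 := congrFun hx' ⟨(i : ℕ), hij⟩
        have h8 : ⟪Jm (b := b) (uA (Fin.castLE j.isLt.le ⟨(i : ℕ), hij⟩)), x⟫_ℂ = 0 := by
          simpa [hΦ] using h7
        have h9 : Fin.castLE j.isLt.le ⟨(i : ℕ), hij⟩ = i := by
          apply Fin.ext
          rfl
        rw [h9] at h8
        rw [← inner_Jm_left]
        exact h8
      have hH0q : (⟪x, Matrix.toEuclideanLin H0 x⟫_ℂ).re =
          ζ * ‖Pm x‖ ^ 2 + (⟪Pp x, Matrix.toEuclideanLin (Bpp H0) (Pp x)⟫_ℂ).re := by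
        rw [quad_expand H0 x, inner_Jm_teu_Jm, inner_Jm_teu_Jp, inner_Jp_teu_Jm,
          inner_Jp_teu_Jp, hBmmH0, hBmpH0, hBpmH0, quad_smul_one]
        simp
      have hD0q : (ζ + Δ) * ‖Pp x‖ ^ 2 ≤
          (⟪Pp x, Matrix.toEuclideanLin (Bpp H0) (Pp x)⟫_ℂ).re :=
        eigen_lower hD0 (ζ + Δ) (fun i => hD0low i) (Pp x)
      have b2 := (abs_le.mp (abs_re_inner_le V (Jm (b := b) (Pm x)) (Jp (Pp x)))).1
      have b3 := (abs_le.mp (abs_re_inner_le V (Jp (a := a) (Pp x)) (Jm (Pm x)))).1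
      have b4 := (abs_le.mp (abs_re_inner_le V (Jp (a := a) (Pp x)) (Jp (Pp x)))).1
      rw [norm_Jm, norm_Jp, ← hvdef] at b2
      rw [norm_Jm, norm_Jp, ← hvdef] at b3
      rw [norm_Jp, ← hvdef] at b4
      have hVq : (⟪Pm x, Matrix.toEuclideanLin (Bmm V) (Pm x)⟫_ℂ).re
            - v * ‖Pm x‖ * ‖Pp x‖ - v * ‖Pp x‖ * ‖Pm x‖ - v * ‖Pp x‖ * ‖Pp x‖ ≤
          (⟪x, Matrix.toEuclideanLin V x⟫_ℂ).re := by
        rw [quad_expand V x, inner_Jm_teu_Jm]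
        linarith
      have hAq : lamA j * ‖Pm x‖ ^ 2 ≤
          ζ * ‖Pm x‖ ^ 2 + (⟪Pm x, Matrix.toEuclideanLin (Bmm V) (Pm x)⟫_ℂ).re := by
        have hq := quad_ge uA lamA (Matrix.toEuclideanLin A) (sBasis_eigen hA) (Pm x)
          (lamA j) ?_
        · rw [hquadA (Pm x)] at hq
          exact hq
        · intro i hne
          by_cases h' : i < j
          · exact absurd (hvany i h') hne
          · exact sorted_monotone hA (le_of_not_gt h')
      have hsum : (⟪x, Matrix.toEuclideanLin (H0 + V) x⟫_ℂ).re =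
          (⟪x, Matrix.toEuclideanLin H0 x⟫_ℂ).re + (⟪x, Matrix.toEuclideanLin V x⟫_ℂ).re := by
        rw [map_add, LinearMap.add_apply, inner_add_right, Complex.add_re]
      have hnorm : ‖x‖ ^ 2 = ‖Pm x‖ ^ 2 + ‖Pp x‖ ^ 2 := norm_sq_split x
      rw [hsum, hnorm, hH0q]
      have hs : (0 : ℝ) ≤ ‖Pm x‖ := norm_nonneg _
      have ht : (0 : ℝ) ≤ ‖Pp x‖ := norm_nonneg _
      nlinarith [hD0q, hVq, hAq, sq_nonneg (ε * ‖Pm x‖ - 2 * v * ‖Pp x‖),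
        sq_nonneg ((ε - 2 * v) * ‖Pp x‖),
        mul_nonneg (mul_nonneg hv hε.le) (sq_nonneg ‖Pp x‖),
        mul_nonneg (sub_nonneg.mpr hAub) (sq_nonneg ‖Pp x‖),
        mul_nonneg (sub_nonneg.mpr hΔε) (sq_nonneg ‖Pp x‖)]
  have h1 : |sortedEigenvalues hSim (Fin.castLE (Nat.le_add_right a b) j) - lamA j| ≤ ε / 2 :=
    abs_le.mpr ⟨by linarith, by linarith⟩
  calc |sortedEigenvalues hSim (Fin.castLE (Nat.le_add_right a b) j) - sortedEigenvalues hHt j|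
      ≤ |sortedEigenvalues hSim (Fin.castLE (Nat.le_add_right a b) j) - lamA j| +
        |lamA j - sortedEigenvalues hHt j| := abs_sub_le _ _ _
    _ ≤ ε / 2 + ε / 2 := by
        rw [abs_sub_comm (lamA j)]
        exact add_le_add h1 hWeyl
    _ = ε := by ring
end
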